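/- arXiv:1203.4200 — 6 statements merged into one kernel-verified Lean document; each statement's English description precedes it below -/
import Mathlib

section
/- A rational function f in K(x) (K a field of characteristic zero) is the derivative with respect to x of some rational function g in K(x) if and only if the residue of f at every pole β in the algebraic closure of K is zero. -/
open Polynomial HahnSeries

noncomputable section PropAuxSection

namespace PropAux

variable {F : Type*} [Field F]

/-- the substitution `X ↦ X + β` on `K[X]`. -/
def shiftp (β : F) : F[X] →+* F[X] := Polynomial.eval₂RingHom Polynomial.C (Polynomial.X + Polynomial.C β)

lemma shiftp_apply (β : F) (q : F[X]) : shiftp β q = q.comp (Polynomial.X + Polynomial.C β) := rfl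

lemma shiftp_ne_zero {β : F} {q : F[X]} (hq : q ≠ 0) : shiftp β q ≠ 0 := by
  intro h
  apply hq
  have := congrArg (fun r => r.comp (Polynomial.X - Polynomial.C β)) h
  simpa [shiftp_apply, Polynomial.comp_assoc, Polynomial.add_comp, Polynomial.sub_comp] using this

/-- the substitution `X ↦ X + β` on `RatFunc F`. -/
def shift (β : F) : RatFunc F →+* RatFunc F :=
  RatFunc.liftRingHom ((algebraMap F[X] (RatFunc F)).comp (shiftp β)) (by
    intro q hq
    simp only [Submonoid.mem_comap, RingHom.coe_comp, Function.comp_apply]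
    exact mem_nonZeroDivisors_of_ne_zero <| RatFunc.algebraMap_ne_zero <|
      shiftp_ne_zero (nonZeroDivisors.ne_zero hq))

lemma shift_algebraMap (β : F) (q : F[X]) :
    shift β (algebraMap F[X] (RatFunc F) q) = algebraMap F[X] (RatFunc F) (shiftp β q) := by
  have := RatFunc.liftRingHom_apply_div ((algebraMap F[X] (RatFunc F)).comp (shiftp β))
    (by intro q hq
        simp only [Submonoid.mem_comap, RingHom.coe_comp, Function.comp_apply]
        exact mem_nonZeroDivisors_of_ne_zero <| RatFunc.algebraMap_ne_zero <|
          shiftp_ne_zero (nonZeroDivisors.ne_zero hq)) q 1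
  simpa [shift] using this

/-- residue at `0` : the coefficient of `X⁻¹` in the Laurent expansion. -/
def res0 (h : RatFunc F) : F := ((h : LaurentSeries F)).coeff (-1)

/-- residue at `β`. -/
def res (β : F) (h : RatFunc F) : F := res0 (shift β h)

lemma res0_add (a b : RatFunc F) : res0 (a + b) = res0 a + res0 b := by
  simp [res0, map_add]

lemma res_add (β : F) (a b : RatFunc F) : res β (a + b) = res β a + res β b := by
  simp [res, map_add, res0_add]

lemma res_sum (β : F) {ι : Type*} (s : Finset ι) (f : ι → RatFunc F) :
    res β (∑ i ∈ s, f i) = ∑ i ∈ s, res β (f i) := by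
  classical
  induction s using Finset.induction_on with
  | empty => simp [res, res0, map_zero]
  | insert _ _ h ih => rw [Finset.sum_insert h, res_add, ih, Finset.sum_insert h]


-- master coefficient lemma
lemma key_coeff (e : ℤ) (u : PowerSeries F) (d : ℤ) :
    ((single e (1:F) : LaurentSeries F) * (u : LaurentSeries F)).coeff d =
      if 0 ≤ d - e then PowerSeries.coeff (d - e).toNat u else 0 := by
  have h := coeff_single_mul_add (r := (1:F)) (x := (u : LaurentSeries F)) (a := d - e) (b := e)
  rw [sub_add_cancel] at h
  rw [h, one_mul, PowerSeries.coeff_coe]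
  by_cases hd : 0 ≤ d - e
  · rw [if_neg (not_lt.mpr hd), if_pos hd]
    have hna : (d - e).natAbs = (d - e).toNat := by omega
    rw [hna]
  · rw [if_neg hd, if_pos (lt_of_not_ge hd)]

lemma coeL_algebraMap (q : F[X]) :
    ((algebraMap F[X] (RatFunc F) q : RatFunc F) : LaurentSeries F) = ((q : PowerSeries F) : LaurentSeries F) := by
  rw [RatFunc.coe_coe]; rfl


-- master residue lemma
lemma res0_X_zpow_mul (e : ℤ) (a b : F[X]) (hb : b.coeff 0 ≠ 0) :
    res0 ((RatFunc.X : RatFunc F) ^ e *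
        (algebraMap F[X] (RatFunc F) a / algebraMap F[X] (RatFunc F) b)) =
      if 0 ≤ -1 - e then PowerSeries.coeff (-1 - e).toNat
        ((a : PowerSeries F) * (b : PowerSeries F)⁻¹) else 0 := by
  have hbghost : PowerSeries.constantCoeff (b : PowerSeries F) ≠ 0 := by
    rwa [Polynomial.constantCoeff_coe]
  have h1 : (b : PowerSeries F) * (b : PowerSeries F)⁻¹ = 1 := PowerSeries.mul_inv_cancel _ hbghost
  have h2 : ((b : PowerSeries F) : LaurentSeries F) * (((b : PowerSeries F)⁻¹ : PowerSeries F) : LaurentSeries F) = 1 := by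
    rw [← PowerSeries.coe_mul, h1, PowerSeries.coe_one]
  have hbinv : ((b : PowerSeries F) : LaurentSeries F)⁻¹ = (((b : PowerSeries F)⁻¹ : PowerSeries F) : LaurentSeries F) :=
    inv_eq_of_mul_eq_one_right h2
  have hX : (((RatFunc.X : RatFunc F) ^ e : RatFunc F) : LaurentSeries F) = single e 1 := by
    rw [map_zpow₀, RatFunc.coe_X, ← RatFunc.single_zpow]
  have hcoe : ((((RatFunc.X : RatFunc F) ^ e *
      (algebraMap F[X] (RatFunc F) a / algebraMap F[X] (RatFunc F) b)) : RatFunc F) : LaurentSeries F)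
      = (single e (1:F) : LaurentSeries F) * (((a : PowerSeries F) * (b : PowerSeries F)⁻¹ : PowerSeries F) : LaurentSeries F) := by
    rw [map_mul, hX, map_div₀, coeL_algebraMap a, coeL_algebraMap b]
    rw [PowerSeries.coe_mul, div_eq_mul_inv, hbinv]
  rw [res0, hcoe, key_coeff]


lemma res0_div_unit (a b : F[X]) (hb : b.coeff 0 ≠ 0) :
    res0 (algebraMap F[X] (RatFunc F) a / algebraMap F[X] (RatFunc F) b) = 0 := by
  have h := res0_X_zpow_mul 0 a b hb
  rw [zpow_zero, one_mul] at h
  rw [h, if_neg (by norm_num)]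

lemma res0_simple (a b : F[X]) (hb : b.coeff 0 ≠ 0) :
    res0 (algebraMap F[X] (RatFunc F) a / algebraMap F[X] (RatFunc F) (Polynomial.X * b)) =
      a.coeff 0 * (b.coeff 0)⁻¹ := by
  have h := res0_X_zpow_mul (-1) a b hb
  have hX : algebraMap F[X] (RatFunc F) a / algebraMap F[X] (RatFunc F) (Polynomial.X * b)
      = (RatFunc.X : RatFunc F) ^ (-1 : ℤ) * (algebraMap F[X] (RatFunc F) a / algebraMap F[X] (RatFunc F) b) := by
    rw [map_mul, RatFunc.algebraMap_X, zpow_neg_one]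
    have hXne : (RatFunc.X : RatFunc F) ≠ 0 := RatFunc.X_ne_zero
    have hbne : algebraMap F[X] (RatFunc F) b ≠ 0 :=
      RatFunc.algebraMap_ne_zero (fun h0 => hb (by simp [h0]))
    field_simp
  rw [hX, h, if_pos (by norm_num)]
  norm_num

lemma res0_CX (c : F) (j : ℕ) :
    res0 ((RatFunc.C c : RatFunc F) / RatFunc.X ^ (j+1)) = if j = 0 then c else 0 := by
  have h := res0_X_zpow_mul (-(j+1) : ℤ) (Polynomial.C c) 1 (by simp)
  have hX : (RatFunc.C c : RatFunc F) / RatFunc.X ^ (j+1)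
      = (RatFunc.X : RatFunc F) ^ (-(j+1) : ℤ) *
        (algebraMap F[X] (RatFunc F) (Polynomial.C c) / algebraMap F[X] (RatFunc F) 1) := by
    rw [map_one, div_one, RatFunc.algebraMap_C, zpow_neg]
    rw [← zpow_natCast (RatFunc.X : RatFunc F) (j+1)]
    push_cast
    rw [mul_comm, div_eq_mul_inv]
  rw [hX, h, if_pos (by push_cast; omega)]
  have h2 : ((-1 : ℤ) - (-(j+1))).toNat = j := by omega
  rw [h2]
  rw [Polynomial.coe_one, inv_one, mul_one, Polynomial.coeff_coe, Polynomial.coeff_C]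


lemma res0_zero : res0 (0 : RatFunc F) = 0 := by
  simp [res0, map_zero]

lemma Xder (m : ℕ) (q : F[X]) :
    Polynomial.X * derivative (Polynomial.X ^ m * q) =
      Polynomial.C (m : F) * (Polynomial.X ^ m * q) + Polynomial.X ^ (m+1) * derivative q := by
  cases m with
  | zero => simp
  | succ n =>
      simp only [derivative_mul, derivative_X_pow]
      push_cast
      ring

lemma PSres (a₁ b₁ : F[X]) (hb₁0 : b₁.coeff 0 ≠ 0) (n : ℕ) (c₁ c₂ : F)
    (hcn : c₁ - c₂ = -(n:F)) :
    PowerSeries.coeff n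
      ((((Polynomial.C c₁ - Polynomial.C c₂) * (a₁*b₁) +
          Polynomial.X*(derivative a₁ * b₁ - a₁*derivative b₁) : F[X]) : PowerSeries F) *
        ((b₁^2 : F[X]) : PowerSeries F)⁻¹) = 0 := by
  have hBc : PowerSeries.constantCoeff ((b₁ : F[X]) : PowerSeries F) ≠ 0 := by
    rwa [Polynomial.constantCoeff_coe]
  have hw : ((b₁ : F[X]) : PowerSeries F) * ((b₁ : F[X]) : PowerSeries F)⁻¹ = 1 :=
    PowerSeries.mul_inv_cancel _ hBc
  have hinv2 : ((b₁^2 : F[X]) : PowerSeries F)⁻¹ = (((b₁ : F[X]) : PowerSeries F)⁻¹)^2 := by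
    rw [Polynomial.coe_pow, pow_two, PowerSeries.mul_inv_rev, ← pow_two]
  have hdw : PowerSeries.derivative F (((b₁ : F[X]) : PowerSeries F)⁻¹) =
      -(((b₁ : F[X]) : PowerSeries F)⁻¹)^2 * PowerSeries.derivative F ((b₁ : F[X]) : PowerSeries F) :=
    PowerSeries.derivative_inv' _
  have hdu : PowerSeries.derivative F ((a₁ : PowerSeries F) * ((b₁ : F[X]) : PowerSeries F)⁻¹) =
      ((derivative a₁ : F[X]) : PowerSeries F) * ((b₁ : F[X]) : PowerSeries F)⁻¹ -
        (a₁ : PowerSeries F) * ((derivative b₁ : F[X]) : PowerSeries F) *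
          (((b₁ : F[X]) : PowerSeries F)⁻¹)^2 := by
    rw [Derivation.leibniz, smul_eq_mul, smul_eq_mul, hdw, PowerSeries.derivative_coe,
      PowerSeries.derivative_coe]
    ring
  have hU : (((((Polynomial.C c₁ - Polynomial.C c₂) * (a₁*b₁) +
          Polynomial.X*(derivative a₁ * b₁ - a₁*derivative b₁)) : F[X]) : PowerSeries F) *
        ((b₁^2 : F[X]) : PowerSeries F)⁻¹) =
      PowerSeries.C (c₁ - c₂) * ((a₁ : PowerSeries F) * ((b₁ : F[X]) : PowerSeries F)⁻¹) +
        PowerSeries.X * PowerSeries.derivative F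
          ((a₁ : PowerSeries F) * ((b₁ : F[X]) : PowerSeries F)⁻¹) := by
    rw [hinv2, hdu]
    push_cast [Polynomial.coe_add, Polynomial.coe_mul, Polynomial.coe_sub, Polynomial.coe_C,
      Polynomial.coe_X]
    rw [map_sub]
    linear_combination ((PowerSeries.C c₁ - PowerSeries.C c₂) * (a₁ : PowerSeries F) *
        ((b₁ : F[X]) : PowerSeries F)⁻¹ +
      PowerSeries.X * ((derivative a₁ : F[X]) : PowerSeries F) *
        ((b₁ : F[X]) : PowerSeries F)⁻¹) * hw
  rw [hU, map_add, PowerSeries.coeff_C_mul, hcn]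
  cases n with
  | zero =>
      rw [PowerSeries.coeff_zero_X_mul]
      push_cast
      ring
  | succ n' =>
      rw [PowerSeries.coeff_succ_X_mul, PowerSeries.coeff_derivative]
      push_cast
      ring

theorem res0_deriv (a b : F[X]) (hb : b ≠ 0) :
    res0 (algebraMap F[X] (RatFunc F) (derivative a * b - a * derivative b) /
      algebraMap F[X] (RatFunc F) (b ^ 2)) = 0 := by
  by_cases ha : a = 0
  · subst ha
    simp only [derivative_zero, zero_mul, mul_zero, sub_zero, zero_sub, neg_zero, map_zero,
      zero_div]
    exact res0_zero
  obtain ⟨m, a₁, hXa₁, ha₁⟩ := WfDvdMonoid.max_power_factor ha Polynomial.irreducible_X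
  obtain ⟨k, b₁, hXb₁, hb₁⟩ := WfDvdMonoid.max_power_factor hb Polynomial.irreducible_X
  have ha₁0 : a₁.coeff 0 ≠ 0 := fun h => hXa₁ (Polynomial.X_dvd_iff.mpr h)
  have hb₁0 : b₁.coeff 0 ≠ 0 := fun h => hXb₁ (Polynomial.X_dvd_iff.mpr h)
  have ha₁ne : a₁ ≠ 0 := fun h => ha₁0 (by simp [h])
  have hb₁ne : b₁ ≠ 0 := fun h => hb₁0 (by simp [h])
  set N : F[X] := (Polynomial.C (m:F) - Polynomial.C (k:F)) * (a₁*b₁) +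
      Polynomial.X * (derivative a₁ * b₁ - a₁ * derivative b₁) with hN
  have hnum : Polynomial.X * (derivative a * b - a * derivative b) = Polynomial.X ^ (m+k) * N := by
    have h1 := Xder m a₁
    have h2 := Xder k b₁
    rw [ha₁, hb₁, hN]
    linear_combination (Polynomial.X ^ k * b₁) * h1 - (Polynomial.X ^ m * a₁) * h2
  have hXne : (RatFunc.X : RatFunc F) ≠ 0 := RatFunc.X_ne_zero
  have hb₁M : algebraMap F[X] (RatFunc F) b₁ ≠ 0 := RatFunc.algebraMap_ne_zero hb₁ne
  have hbM : algebraMap F[X] (RatFunc F) (b^2) ≠ 0 :=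
    RatFunc.algebraMap_ne_zero (pow_ne_zero _ hb)
  have hb2 : algebraMap F[X] (RatFunc F) (b^2) =
      ((RatFunc.X : RatFunc F)^k * algebraMap F[X] (RatFunc F) b₁)^2 := by
    simp only [hb₁, mul_pow, map_mul, map_pow, RatFunc.algebraMap_X]
  have key : algebraMap F[X] (RatFunc F) (derivative a * b - a * derivative b) /
      algebraMap F[X] (RatFunc F) (b ^ 2)
      = (RatFunc.X : RatFunc F) ^ ((m:ℤ) - k - 1) *
        (algebraMap F[X] (RatFunc F) N / algebraMap F[X] (RatFunc F) (b₁^2)) := by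
    have hmap := congrArg (algebraMap F[X] (RatFunc F)) hnum
    simp only [map_mul, map_pow, RatFunc.algebraMap_X] at hmap
    have e1 : (RatFunc.X : RatFunc F) ^ ((m:ℤ) - k - 1) =
        RatFunc.X ^ m / (RatFunc.X ^ k * RatFunc.X) := by
      rw [zpow_sub₀ hXne, zpow_sub₀ hXne, zpow_natCast, zpow_natCast, zpow_one, div_div]
    rw [e1, div_mul_div_comm, div_eq_div_iff hbM (by
      apply mul_ne_zero (mul_ne_zero (pow_ne_zero _ hXne) hXne)
      exact RatFunc.algebraMap_ne_zero (pow_ne_zero _ hb₁ne))]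
    rw [hb2, map_pow]
    linear_combination ((RatFunc.X : RatFunc F)^k * (algebraMap F[X] (RatFunc F) b₁)^2) * hmap
  rw [key, res0_X_zpow_mul _ N (b₁^2) (by
    have h2 : (b₁^2).coeff 0 = (b₁.coeff 0)^2 := by
      rw [pow_two, pow_two, Polynomial.mul_coeff_zero]
    rw [h2]; exact pow_ne_zero _ hb₁0)]
  by_cases hmk : m ≤ k
  · rw [if_pos (by push_cast; omega)]
    have hidx : (-1 - ((m:ℤ) - k - 1)).toNat = k - m := by omega
    rw [hidx, hN]
    apply PSres a₁ b₁ hb₁0 (k - m) _ _ _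
    have : ((k - m : ℕ) : F) = (k : F) - m := by rw [Nat.cast_sub hmk]
    rw [this]; ring
  · rw [if_neg (by push_cast; omega)]



end PropAux


namespace PropAux2

variable {K : Type*} [Field K] [CharZero K]
variable (δ : Derivation ℤ (RatFunc K) (RatFunc K))
  (hδC : ∀ a : K, δ (RatFunc.C a) = 0) (hδX : δ RatFunc.X = 1)

include hδC hδX in
lemma delta_algebraMap (q : K[X]) :
    δ (algebraMap K[X] (RatFunc K) q) = algebraMap K[X] (RatFunc K) (derivative q) := by
  induction q using Polynomial.induction_on with
  | C a => rw [RatFunc.algebraMap_C, hδC, derivative_C, map_zero]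
  | add p q hp hq => rw [map_add, map_add, hp, hq, derivative_add, map_add]
  | monomial n a ih =>
      rw [map_mul, Derivation.leibniz, smul_eq_mul, smul_eq_mul, RatFunc.algebraMap_C, hδC,
        mul_zero, add_zero, map_pow, RatFunc.algebraMap_X, Derivation.leibniz_pow, hδX,
        smul_eq_mul, mul_one, derivative_C_mul, derivative_X_pow, Nat.add_sub_cancel]
      rw [map_mul, map_mul, RatFunc.algebraMap_C, map_pow, RatFunc.algebraMap_X,
        RatFunc.algebraMap_C]
      rw [nsmul_eq_mul, map_natCast RatFunc.C (n+1)]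

include hδC hδX in
lemma delta_div (a b : K[X]) (hb : b ≠ 0) :
    δ (algebraMap K[X] (RatFunc K) a / algebraMap K[X] (RatFunc K) b) =
      algebraMap K[X] (RatFunc K) (derivative a * b - a * derivative b) /
        algebraMap K[X] (RatFunc K) (b ^ 2) := by
  have hbM : algebraMap K[X] (RatFunc K) b ≠ 0 := RatFunc.algebraMap_ne_zero hb
  have h1 : (algebraMap K[X] (RatFunc K) a / algebraMap K[X] (RatFunc K) b) *
      algebraMap K[X] (RatFunc K) b = algebraMap K[X] (RatFunc K) a := by
    field_simp
  have h2 := congrArg δ h1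
  rw [Derivation.leibniz, smul_eq_mul, smul_eq_mul, delta_algebraMap δ hδC hδX,
    delta_algebraMap δ hδC hδX] at h2
  rw [eq_div_iff (RatFunc.algebraMap_ne_zero (pow_ne_zero 2 hb))]
  rw [map_sub, map_mul, map_mul, map_pow]
  linear_combination (algebraMap K[X] (RatFunc K) b) * h2 -
    (algebraMap K[X] (RatFunc K) (derivative b)) * h1

lemma antideriv (q : K[X]) : ∃ Q : K[X], derivative Q = q := by
  refine ⟨q.sum fun i c => Polynomial.C (c / (i+1)) * Polynomial.X ^ (i+1), ?_⟩
  rw [Polynomial.sum, map_sum]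
  have h : ∀ i ∈ q.support,
      derivative (Polynomial.C (q.coeff i / (i+1)) * Polynomial.X ^ (i+1)) =
        Polynomial.C (q.coeff i) * Polynomial.X ^ i := by
    intro i _
    have hne : ((i:K) + 1) ≠ 0 := by exact_mod_cast (Nat.succ_ne_zero i)
    rw [derivative_C_mul, derivative_X_pow, Nat.add_sub_cancel, ← mul_assoc, ← Polynomial.C_mul]
    push_cast
    rw [div_mul_cancel₀ _ hne]
  rw [Finset.sum_congr rfl h]
  exact Polynomial.sum_C_mul_X_pow_eq q


include hδC hδX in
lemma hermite : ∀ (d : ℕ) (v : K[X]), v ≠ 0 → v.natDegree ≤ d → ∀ u : K[X],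
    ∃ (g : RatFunc K) (a b : K[X]), b ≠ 0 ∧ Squarefree b ∧
      algebraMap K[X] (RatFunc K) u / algebraMap K[X] (RatFunc K) v =
        δ g + algebraMap K[X] (RatFunc K) a / algebraMap K[X] (RatFunc K) b := by
  intro d
  induction d using Nat.strong_induction_on with
  | _ d ih =>
    intro v hv hdeg u
    by_cases hsf : Squarefree v
    · exact ⟨0, u, v, hv, hsf, by rw [map_zero, zero_add]⟩
    rw [Squarefree] at hsf; push_neg at hsf
    obtain ⟨x, hxx, hxu⟩ := hsf
    have hx0 : x ≠ 0 := by
      rintro rfl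
      exact hv (zero_dvd_iff.mp (by simpa using hxx))
    obtain ⟨p, hpirr, hpx⟩ := WfDvdMonoid.exists_irreducible_factor hxu hx0
    have hp : Prime p := hpirr.prime
    have hp2v : p^2 ∣ v := by
      refine dvd_trans ?_ hxx
      rw [pow_two]
      exact mul_dvd_mul hpx hpx
    obtain ⟨k, w, hpw, hvw⟩ := WfDvdMonoid.max_power_factor hv hpirr
    have hw0 : w ≠ 0 := fun h => hv (by rw [hvw, h, mul_zero])
    have hk2 : 2 ≤ k := by
      by_contra hk
      push_neg at hk
      have h1 : p^2 ∣ p^k * w := hvw ▸ hp2v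
      have h2 : p^2 ∣ p^k := hp.pow_dvd_of_dvd_mul_right 2 hpw h1
      have h3 : p^2 ∣ p^1 := h2.trans (pow_dvd_pow p (by omega))
      rw [pow_two, pow_one] at h3
      nth_rewrite 3 [← mul_one p] at h3
      exact hp.not_unit (isUnit_of_dvd_one ((mul_dvd_mul_iff_left hp.ne_zero).mp h3))
    obtain ⟨j, rfl⟩ : ∃ j, k = j + 2 := ⟨k - 2, by omega⟩
    have hpd : 0 < p.natDegree := hpirr.natDegree_pos
    have hsep : IsCoprime p (derivative p) := PerfectField.separable_of_irreducible hpirr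
    have hcop : IsCoprime p (derivative p * w) :=
      hsep.mul_right (hp.coprime_iff_not_dvd.mpr hpw)
    obtain ⟨s, t, hst⟩ := hcop
    have hst' : (u * s) * p + (u * t) * (derivative p * w) = u := by
      linear_combination u * hst
    have hc : ((j:K) + 1) ≠ 0 := by exact_mod_cast Nat.succ_ne_zero j
    have hCc : Polynomial.C ((j:K)+1) * Polynomial.C ((j:K)+1)⁻¹ = (1 : K[X]) := by
      rw [← Polynomial.C_mul, mul_inv_cancel₀ hc, Polynomial.C_1]
    have hP1 : p^(j+1) ≠ 0 := pow_ne_zero _ hp.ne_zero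
    have hb3 : p^(j+1) * w ≠ 0 := mul_ne_zero hP1 hw0
    have hP1M : algebraMap K[X] (RatFunc K) (p^(j+1)) ≠ 0 := RatFunc.algebraMap_ne_zero hP1
    have hb3M : algebraMap K[X] (RatFunc K) (p^(j+1) * w) ≠ 0 := RatFunc.algebraMap_ne_zero hb3
    have hP2M : algebraMap K[X] (RatFunc K) ((p^(j+1))^2) ≠ 0 :=
      RatFunc.algebraMap_ne_zero (pow_ne_zero _ hP1)
    have hvM : algebraMap K[X] (RatFunc K) v ≠ 0 := RatFunc.algebraMap_ne_zero hv
    set τ : K[X] := u * t with hτ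
    set σ : K[X] := u * s with hσ
    set a2 : K[X] := Polynomial.C ((j:K)+1)⁻¹ * -τ with ha2
    set a3 : K[X] := σ + Polynomial.C ((j:K)+1)⁻¹ * derivative τ * w with ha3
    have key : algebraMap K[X] (RatFunc K) u / algebraMap K[X] (RatFunc K) v =
        δ (algebraMap K[X] (RatFunc K) a2 / algebraMap K[X] (RatFunc K) (p^(j+1))) +
          algebraMap K[X] (RatFunc K) a3 / algebraMap K[X] (RatFunc K) (p^(j+1) * w) := by
      rw [delta_div δ hδC hδX _ _ hP1]
      have PI : u * ((p^(j+1))^2 * (p^(j+1) * w)) =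
          (derivative a2 * p^(j+1) - a2 * derivative (p^(j+1))) * (v * (p^(j+1) * w)) +
            a3 * (v * (p^(j+1))^2) := by
        have hdP1 : derivative (p^(j+1)) =
            Polynomial.C ((j:K)+1) * p^j * derivative p := by
          rw [derivative_pow, Nat.add_sub_cancel]
          push_cast
          ring
        rw [hdP1, ha2, ha3, derivative_C_mul, derivative_neg, hvw, ← hst']
        linear_combination (-(τ * derivative p * p^(3*j+3) * w^2)) * hCc
      rw [div_add_div _ _ hP2M hb3M, div_eq_div_iff hvM (mul_ne_zero hP2M hb3M)]
      have hPI := congrArg (algebraMap K[X] (RatFunc K)) PI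
      simp only [map_mul, map_add, map_sub, map_pow] at hPI ⊢
      linear_combination hPI
    have hdegv : v.natDegree = (j+2) * p.natDegree + w.natDegree := by
      rw [hvw, Polynomial.natDegree_mul (pow_ne_zero _ hp.ne_zero) hw0, Polynomial.natDegree_pow]
    have hdegb3 : (p^(j+1) * w).natDegree = (j+1) * p.natDegree + w.natDegree := by
      rw [Polynomial.natDegree_mul hP1 hw0, Polynomial.natDegree_pow]
    have hlt : (p^(j+1) * w).natDegree < d := by
      have : (p^(j+1) * w).natDegree < v.natDegree := by
        rw [hdegv, hdegb3]
        have : (j+1) * p.natDegree < (j+2) * p.natDegree :=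
          Nat.mul_lt_mul_of_pos_right (by omega) hpd
        omega
      omega
    obtain ⟨g1, a, b, hb, hsfb, heq⟩ :=
      ih (p^(j+1) * w).natDegree hlt (p^(j+1) * w) hb3 le_rfl a3
    refine ⟨algebraMap K[X] (RatFunc K) a2 / algebraMap K[X] (RatFunc K) (p^(j+1)) + g1,
      a, b, hb, hsfb, ?_⟩
    rw [key, heq, map_add, add_assoc]



end PropAux2

end PropAuxSection
noncomputable section Part7

namespace PropAux

open Polynomial HahnSeries

variable {F : Type*} [Field F]

lemma res_algebraMap (γ : F) (q : F[X]) : res γ (algebraMap F[X] (RatFunc F) q) = 0 := by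
  rw [res, shift_algebraMap]
  have h := res0_div_unit (shiftp γ q) 1 (by simp)
  rw [map_one, div_one] at h
  exact h

lemma shiftp_derivative (γ : F) (q : F[X]) :
    shiftp γ (derivative q) = derivative (shiftp γ q) := by
  rw [shiftp_apply, shiftp_apply, Polynomial.derivative_comp]
  simp

lemma res_deriv (γ : F) (a b : F[X]) (hb : b ≠ 0) :
    res γ (algebraMap F[X] (RatFunc F) (derivative a * b - a * derivative b) /
      algebraMap F[X] (RatFunc F) (b^2)) = 0 := by
  rw [res, map_div₀, shift_algebraMap, shift_algebraMap]
  rw [map_sub, map_mul, map_mul, map_pow, shiftp_derivative, shiftp_derivative]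
  exact res0_deriv _ _ (shiftp_ne_zero hb)

open scoped Classical in
lemma res_term (γ c d : F) (j : ℕ) :
    res γ ((RatFunc.C c : RatFunc F) / (RatFunc.X - RatFunc.C d)^(j+1)) =
      if d = γ ∧ j = 0 then c else 0 := by
  classical
  have hterm : (RatFunc.C c : RatFunc F) / (RatFunc.X - RatFunc.C d)^(j+1) =
      algebraMap F[X] (RatFunc F) (Polynomial.C c) /
        algebraMap F[X] (RatFunc F) ((Polynomial.X - Polynomial.C d)^(j+1)) := by
    rw [map_pow, map_sub, RatFunc.algebraMap_X, RatFunc.algebraMap_C, RatFunc.algebraMap_C]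
  have hC : shiftp γ (Polynomial.C c) = Polynomial.C c := by
    rw [shiftp_apply, Polynomial.C_comp]
  have hpow : shiftp γ ((Polynomial.X - Polynomial.C d)^(j+1)) =
      (Polynomial.X + Polynomial.C (γ - d))^(j+1) := by
    rw [map_pow]
    congr 1
    rw [shiftp_apply, Polynomial.sub_comp, Polynomial.X_comp, Polynomial.C_comp,
      Polynomial.C_sub]
    ring
  rw [hterm, res, map_div₀, shift_algebraMap, shift_algebraMap, hC, hpow]
  by_cases hd : d = γ
  · subst hd
    rw [sub_self, Polynomial.C_0, add_zero]
    rw [map_pow, RatFunc.algebraMap_X, RatFunc.algebraMap_C, res0_CX]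
    simp
  · rw [if_neg (fun hh => hd hh.1)]
    have hne : γ - d ≠ 0 := sub_ne_zero.mpr (fun hh => hd hh.symm)
    apply res0_div_unit
    rw [Polynomial.coeff_zero_eq_eval_zero]
    simp only [Polynomial.eval_pow, Polynomial.eval_add, Polynomial.eval_X, Polynomial.eval_C,
      zero_add]
    exact pow_ne_zero _ hne

lemma squarefree_dvd_of_roots [IsAlgClosed F] [DecidableEq F] {a b : F[X]} (hb : b ≠ 0)
    (hsep : b.Separable) (h : ∀ β : F, b.eval β = 0 → a.eval β = 0) : b ∣ a := by
  have hsplit : b.Splits := IsAlgClosed.splits b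
  have hcard : Multiset.card b.roots = b.natDegree := (Polynomial.splits_iff_card_roots).mp hsplit
  have hbeq : Polynomial.C b.leadingCoeff *
      (b.roots.map fun r => Polynomial.X - Polynomial.C r).prod = b :=
    Polynomial.C_leadingCoeff_mul_prod_multiset_X_sub_C hcard
  have hnodup : b.roots.Nodup := Polynomial.nodup_roots hsep
  have hval : b.roots.toFinset.val = b.roots := by
    rw [Multiset.toFinset_val, hnodup.dedup]
  have hprodvd : (b.roots.map fun r => Polynomial.X - Polynomial.C r).prod ∣ a := by
    rw [← hval, ← Finset.prod_eq_multiset_prod]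
    apply Finset.prod_dvd_of_coprime
    · intro r hr r' hr' hrr'
      exact Polynomial.isCoprime_X_sub_C_of_isUnit_sub (IsUnit.mk0 _ (sub_ne_zero.mpr hrr'))
    · intro r hr
      rw [Polynomial.dvd_iff_isRoot]
      apply h
      exact Polynomial.isRoot_of_mem_roots (Multiset.mem_toFinset.mp hr)
  rw [← hbeq]
  have hu : IsUnit (Polynomial.C b.leadingCoeff) :=
    Polynomial.isUnit_C.mpr (IsUnit.mk0 _ (Polynomial.leadingCoeff_ne_zero.mpr hb))
  rw [mul_comm]
  exact (IsUnit.mul_right_dvd hu).mpr hprodvd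

end PropAux

end Part7

/-- Proposition 2.2: a rational function `f ∈ K(x)` (`K` of characteristic zero) is the
derivative of a rational function in `K(x)` if and only if all its residues at its poles in
the algebraic closure of `K` vanish.  The residues are read off from the partial fraction
decomposition `ι f = p + ∑_i ∑_{j} α_{i,j}/(x-β_i)^{j+1}` over the algebraic closure,
where `ι : K(x) → K̄(x)` is the canonical inclusion (characterized on `C` and `X`);
the residue of `f` at `β_i` is `α_{i,0}`.  `δ` is the derivation `d/dx` of `K(x)`,
characterized by killing constants and sending `x` to `1`. -/
theorem stmt0 {K : Type*} [Field K] [CharZero K]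
    (f : RatFunc K)
    (ι : RatFunc K →+* RatFunc (AlgebraicClosure K))
    (hιC : ∀ a : K, ι (RatFunc.C a) = RatFunc.C (algebraMap K (AlgebraicClosure K) a))
    (hιX : ι RatFunc.X = RatFunc.X)
    -- partial fraction decomposition of `f` over the algebraic closure
    (p : Polynomial (AlgebraicClosure K)) (m : ℕ)
    (n : Fin m → ℕ) (α : Fin m → ℕ → AlgebraicClosure K)
    (β : Fin m → AlgebraicClosure K) (hβ : Function.Injective β)
    (hdecomp : ι f =
      algebraMap (Polynomial (AlgebraicClosure K)) (RatFunc (AlgebraicClosure K)) p +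
        ∑ i : Fin m, ∑ j ∈ Finset.range (n i),
          RatFunc.C (α i j) / (RatFunc.X - RatFunc.C (β i)) ^ (j + 1))
    -- the derivation `d/dx` on `K(x)`
    (δ : Derivation ℤ (RatFunc K) (RatFunc K))
    (hδC : ∀ a : K, δ (RatFunc.C a) = 0)
    (hδX : δ RatFunc.X = 1) :
    (∃ g : RatFunc K, f = δ g) ↔ ∀ i : Fin m, 0 < n i → α i 0 = 0 := by
  classical
  -- ι on polynomials
  have hιalg : ∀ q : K[X], ι (algebraMap K[X] (RatFunc K) q) =
      algebraMap (Polynomial (AlgebraicClosure K)) (RatFunc (AlgebraicClosure K)) (q.map (algebraMap K (AlgebraicClosure K))) := by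
    intro q
    have hhom : ι.comp (algebraMap K[X] (RatFunc K)) =
        (algebraMap (Polynomial (AlgebraicClosure K)) (RatFunc (AlgebraicClosure K))).comp (Polynomial.mapRingHom (algebraMap K (AlgebraicClosure K))) := by
      apply Polynomial.ringHom_ext
      · intro a
        simp only [RingHom.comp_apply, Polynomial.coe_mapRingHom, Polynomial.map_C,
          RatFunc.algebraMap_C]
        exact hιC a
      · simp only [RingHom.comp_apply, Polynomial.coe_mapRingHom, Polynomial.map_X,
          RatFunc.algebraMap_X]
        exact hιX
    exact RingHom.congr_fun hhom q
  -- residues of images of derivatives vanish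
  have hδres : ∀ (g : RatFunc K) (γ : (AlgebraicClosure K)), PropAux.res γ (ι (δ g)) = 0 := by
    intro g γ
    have hg : δ g = algebraMap K[X] (RatFunc K)
        (derivative g.num * g.denom - g.num * derivative g.denom) /
          algebraMap K[X] (RatFunc K) (g.denom ^ 2) := by
      conv_lhs => rw [← RatFunc.num_div_denom g]
      rw [PropAux2.delta_div δ hδC hδX _ _ (RatFunc.denom_ne_zero g)]
    rw [hg, map_div₀, hιalg, hιalg]
    rw [Polynomial.map_sub, Polynomial.map_mul, Polynomial.map_mul, Polynomial.map_pow,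
      ← Polynomial.derivative_map, ← Polynomial.derivative_map]
    exact PropAux.res_deriv γ _ _ (Polynomial.map_ne_zero (RatFunc.denom_ne_zero g))
  -- residues of ι f via the decomposition
  have hresf : ∀ γ : (AlgebraicClosure K), PropAux.res γ (ι f) =
      ∑ i : Fin m, ∑ j ∈ Finset.range (n i),
        (if β i = γ ∧ j = 0 then α i j else 0) := by
    intro γ
    rw [hdecomp, PropAux.res_add, PropAux.res_algebraMap, zero_add, PropAux.res_sum]
    refine Finset.sum_congr rfl fun i _ => ?_
    rw [PropAux.res_sum]
    exact Finset.sum_congr rfl fun j _ => PropAux.res_term γ (α i j) (β i) j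
  constructor
  · rintro ⟨g, rfl⟩ i hni
    have h0 := hδres g (β i)
    rw [hresf (β i)] at h0
    rw [Finset.sum_eq_single i (fun i' _ hne => Finset.sum_eq_zero fun j _ => by
        rw [if_neg]; rintro ⟨hbb, _⟩; exact hne (hβ hbb))
      (fun hnotin => absurd (Finset.mem_univ i) hnotin)] at h0
    simp only [true_and] at h0
    rw [Finset.sum_ite_eq' (Finset.range (n i)) 0 (fun j => α i j)] at h0
    rwa [if_pos (Finset.mem_range.mpr hni)] at h0
  · intro hα
    have hres0 : ∀ γ : (AlgebraicClosure K), PropAux.res γ (ι f) = 0 := by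
      intro γ
      rw [hresf]
      refine Finset.sum_eq_zero fun i _ => Finset.sum_eq_zero fun j hj => ?_
      split_ifs with hc
      · obtain ⟨hbb, hj0⟩ := hc
        subst hj0
        exact hα i (Finset.mem_range.mp hj)
      · rfl
    obtain ⟨g, a, b, hb, hsfb, heq⟩ := PropAux2.hermite δ hδC hδX f.denom.natDegree f.denom
      (RatFunc.denom_ne_zero f) le_rfl f.num
    rw [RatFunc.num_div_denom f] at heq
    have hbbar : b.map (algebraMap K (AlgebraicClosure K)) ≠ 0 := Polynomial.map_ne_zero hb
    have hsepb : b.Separable := (PerfectField.separable_iff_squarefree).mpr hsfb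
    have hsepbbar : (b.map (algebraMap K (AlgebraicClosure K))).Separable := hsepb.map
    have h2 : ι f = ι (δ g) +
        algebraMap (Polynomial (AlgebraicClosure K)) (RatFunc (AlgebraicClosure K)) (a.map (algebraMap K (AlgebraicClosure K))) /
          algebraMap (Polynomial (AlgebraicClosure K)) (RatFunc (AlgebraicClosure K)) (b.map (algebraMap K (AlgebraicClosure K))) := by
      rw [heq, map_add, map_div₀, hιalg, hιalg]
    have hresab : ∀ γ : (AlgebraicClosure K),
        PropAux.res γ (algebraMap (Polynomial (AlgebraicClosure K)) (RatFunc (AlgebraicClosure K)) (a.map (algebraMap K (AlgebraicClosure K))) /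
          algebraMap (Polynomial (AlgebraicClosure K)) (RatFunc (AlgebraicClosure K)) (b.map (algebraMap K (AlgebraicClosure K)))) = 0 := by
      intro γ
      have h1 := hres0 γ
      rw [h2, PropAux.res_add, hδres] at h1
      rwa [zero_add] at h1
    have hroots : ∀ γ : (AlgebraicClosure K), (b.map (algebraMap K (AlgebraicClosure K))).eval γ = 0 →
        (a.map (algebraMap K (AlgebraicClosure K))).eval γ = 0 := by
      intro γ hγ
      obtain ⟨q, hq⟩ := Polynomial.dvd_iff_isRoot.mpr hγ
      have hsq : Squarefree (b.map (algebraMap K (AlgebraicClosure K))) := hsepbbar.squarefree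
      have hqγ : q.eval γ ≠ 0 := by
        intro h0
        obtain ⟨r, hr⟩ := Polynomial.dvd_iff_isRoot.mpr h0
        refine Polynomial.not_isUnit_X_sub_C γ (hsq (Polynomial.X - Polynomial.C γ) ?_)
        rw [hq, hr]
        exact ⟨r, by ring⟩
      have h3 := hresab γ
      rw [PropAux.res, map_div₀, PropAux.shift_algebraMap, PropAux.shift_algebraMap, hq,
        map_mul] at h3
      have hXshift : PropAux.shiftp γ (Polynomial.X - Polynomial.C γ) = Polynomial.X := by
        rw [PropAux.shiftp_apply, Polynomial.sub_comp, Polynomial.X_comp, Polynomial.C_comp]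
        ring
      rw [hXshift, PropAux.res0_simple _ _ (by
          rw [Polynomial.coeff_zero_eq_eval_zero, PropAux.shiftp_apply, Polynomial.eval_comp]
          simpa using hqγ)] at h3
      have hev : ((PropAux.shiftp γ) (a.map (algebraMap K (AlgebraicClosure K)))).coeff 0 =
          (a.map (algebraMap K (AlgebraicClosure K))).eval γ := by
        rw [Polynomial.coeff_zero_eq_eval_zero, PropAux.shiftp_apply, Polynomial.eval_comp]
        simp
      rw [hev] at h3
      have hqc : ((PropAux.shiftp γ) q).coeff 0 ≠ 0 := by
        rw [Polynomial.coeff_zero_eq_eval_zero, PropAux.shiftp_apply, Polynomial.eval_comp]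
        simpa using hqγ
      rcases mul_eq_zero.mp h3 with h4 | h4
      · exact h4
      · exact absurd h4 (inv_ne_zero hqc)
    have hdvd : b.map (algebraMap K (AlgebraicClosure K)) ∣ a.map (algebraMap K (AlgebraicClosure K)) :=
      PropAux.squarefree_dvd_of_roots hbbar hsepbbar hroots
    have hdvdK : b ∣ a := (Polynomial.map_dvd_map' (algebraMap K (AlgebraicClosure K))).mp hdvd
    obtain ⟨t, rfl⟩ := hdvdK
    have hdiv : algebraMap K[X] (RatFunc K) (b*t) / algebraMap K[X] (RatFunc K) b =
        algebraMap K[X] (RatFunc K) t := by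
      rw [map_mul, mul_comm, mul_div_assoc, div_self (RatFunc.algebraMap_ne_zero hb), mul_one]
    obtain ⟨T, hT⟩ := PropAux2.antideriv (K := K) t
    refine ⟨g + algebraMap K[X] (RatFunc K) T, ?_⟩
    rw [map_add, PropAux2.delta_algebraMap δ hδC hδX, hT, heq, hdiv]
end

section
/- Let q be an element of K that is not a root of unity, β ≠ 0, and f = Σ_{ℓ=0}^{d} α_ℓ/(x - q^ℓ β)^s with α_ℓ, β algebraic over K. Then f is rational q-summable (f(x) = g(qx) - g(x) for some rational function g over \bar{K}) if and only if Σ_{ℓ=0}^{d} q^{-ℓs} α_ℓ = 0. -/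
open Polynomial RatFunc HahnSeries

namespace Stmt3Aux

variable {L : Type*} [Field L]

/-- scaled coefficient function as a Laurent series -/
def scaleFun (q : L) (hq0 : q ≠ 0) (p : LaurentSeries L) : LaurentSeries L :=
  ⟨fun k => q ^ k * p.coeff k, by
    have : (Function.support fun k : ℤ => q ^ k * p.coeff k) = Function.support p.coeff := by
      ext k
      simp [Function.mem_support, mul_eq_zero, zpow_ne_zero k hq0]
    rw [this]; exact p.isPWO_support'⟩

@[simp] lemma scaleFun_coeff (q : L) (hq0 : q ≠ 0) (p : LaurentSeries L) (k : ℤ) :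
    (scaleFun q hq0 p).coeff k = q ^ k * p.coeff k := rfl

lemma scaleFun_mul (q : L) (hq0 : q ≠ 0) (x y : LaurentSeries L) :
    scaleFun q hq0 (x * y) = scaleFun q hq0 x * scaleFun q hq0 y := by
  ext a
  rw [scaleFun_coeff, HahnSeries.coeff_mul, HahnSeries.coeff_mul, Finset.mul_sum]
  have hA : Finset.antidiagonal (scaleFun q hq0 x).isPWO_support
      (scaleFun q hq0 y).isPWO_support a
      = Finset.antidiagonal x.isPWO_support y.isPWO_support a := by
    ext ij
    simp [Finset.mem_antidiagonal, HahnSeries.mem_support, mul_eq_zero,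
      zpow_eq_zero_iff, hq0]
    have h1 : q ^ ij.1 ≠ 0 := zpow_ne_zero _ hq0
    have h2 : q ^ ij.2 ≠ 0 := zpow_ne_zero _ hq0
    tauto
  rw [hA]
  refine Finset.sum_congr rfl fun ij hij => ?_
  rw [Finset.mem_antidiagonal] at hij
  rw [scaleFun_coeff, scaleFun_coeff, ← hij.2.2, zpow_add₀ hq0]
  ring

/-- The coefficient-scaling ring hom on Laurent series: coeff k ↦ q^k * coeff k. -/
def scaleHom (q : L) (hq0 : q ≠ 0) : LaurentSeries L →+* LaurentSeries L where
  toFun := scaleFun q hq0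
  map_one' := by
    ext k
    by_cases h : k = 0 <;> simp [HahnSeries.coeff_one, h]
  map_mul' := scaleFun_mul q hq0
  map_zero' := by ext k; simp
  map_add' x y := by ext k; simp [mul_add]

@[simp] lemma scaleHom_coeff (q : L) (hq0 : q ≠ 0) (p : LaurentSeries L) (k : ℤ) :
    (scaleHom q hq0 p).coeff k = q ^ k * p.coeff k := rfl

lemma scaleHom_single (q : L) (hq0 : q ≠ 0) (a : ℤ) (r : L) :
    scaleHom q hq0 (HahnSeries.single a r) = HahnSeries.single a (q ^ a * r) := by
  ext k
  by_cases h : k = a <;> simp [HahnSeries.coeff_single, h, scaleHom]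

end Stmt3Aux

namespace Stmt3Aux

variable {L : Type*} [Field L]

/-- expansion-at-c ring hom into Laurent series -/
noncomputable def phi (c : L) : RatFunc L →+* LaurentSeries L :=
  (algebraMap (RatFunc L) (LaurentSeries L)).comp (RatFunc.laurent c).toRingHom

lemma phi_apply (c : L) (f : RatFunc L) :
    phi c f = ((RatFunc.laurent c f : RatFunc L) : LaurentSeries L) := rfl

lemma phi_C (c a : L) : phi c (RatFunc.C a) = HahnSeries.C a := by
  rw [phi_apply, RatFunc.laurent_C, ← RatFunc.algebraMap_C, ← IsScalarTower.algebraMap_apply]; simp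

lemma phi_X (c : L) : phi c RatFunc.X = HahnSeries.single 1 1 + HahnSeries.C c := by
  rw [phi_apply, RatFunc.laurent_X, map_add, RatFunc.coe_X, ← RatFunc.algebraMap_C,
    ← IsScalarTower.algebraMap_apply]; simp

lemma scaleHom_C (q : L) (hq0 : q ≠ 0) (a : L) :
    scaleHom q hq0 (HahnSeries.C a) = HahnSeries.C a := by
  rw [HahnSeries.C_apply, scaleHom_single, zpow_zero, one_mul]

/-- ring homs out of RatFunc agreeing on C and X agree -/
lemma ratFuncRingHom_ext {A : Type*} [DivisionRing A] (F G : RatFunc L →+* A)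
    (hC : ∀ a : L, F (RatFunc.C a) = G (RatFunc.C a)) (hX : F RatFunc.X = G RatFunc.X) :
    F = G := by
  have hpoly : F.comp (algebraMap L[X] (RatFunc L)) = G.comp (algebraMap L[X] (RatFunc L)) := by
    apply Polynomial.ringHom_ext
    · intro a
      simpa [RatFunc.algebraMap_C] using hC a
    · simpa [RatFunc.algebraMap_X] using hX
  have hp : ∀ p : L[X], F (algebraMap L[X] (RatFunc L) p) = G (algebraMap L[X] (RatFunc L) p) := by
    intro p
    have := RingHom.congr_fun hpoly p
    simpa [RingHom.comp_apply] using this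
  ext x
  rw [← RatFunc.num_div_denom x, map_div₀, map_div₀, hp, hp]

/-- key commuting identity: expansion of h(qx) at c = scaled expansion of h at qc -/
lemma phi_tau (q : L) (hq0 : q ≠ 0) (τ : RatFunc L →+* RatFunc L)
    (hτC : ∀ a : L, τ (RatFunc.C a) = RatFunc.C a)
    (hτX : τ RatFunc.X = RatFunc.C q * RatFunc.X) (c : L) :
    (phi c).comp τ = (scaleHom q hq0).comp (phi (q * c)) := by
  apply ratFuncRingHom_ext
  · intro a
    simp only [RingHom.comp_apply, hτC, phi_C, scaleHom_C]
  · simp only [RingHom.comp_apply, hτX, map_mul, phi_C, phi_X]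
    rw [map_add (scaleHom q hq0), scaleHom_single, ← map_mul, scaleHom_C, zpow_one, mul_one,
      mul_add]
    congr 1
    · rw [HahnSeries.C_apply, HahnSeries.single_mul_single, zero_add, mul_one]
    · rw [← map_mul HahnSeries.C q c]

end Stmt3Aux

namespace Stmt3Aux

variable {L : Type*} [Field L]

/-- coefficient of (x-c)^{-s} in the Laurent expansion of h at c -/
noncomputable def D (s : ℕ) (c : L) (h : RatFunc L) : L := (phi c h).coeff (-(s : ℤ))

lemma D_sub (s : ℕ) (c : L) (h₁ h₂ : RatFunc L) :
    D s c (h₁ - h₂) = D s c h₁ - D s c h₂ := by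
  unfold D; rw [map_sub, HahnSeries.coeff_sub]

lemma D_tau (s : ℕ) (q : L) (hq0 : q ≠ 0) (τ : RatFunc L →+* RatFunc L)
    (hτC : ∀ a : L, τ (RatFunc.C a) = RatFunc.C a)
    (hτX : τ RatFunc.X = RatFunc.C q * RatFunc.X) (c : L) (h : RatFunc L) :
    D s c (τ h) = q ^ (-(s : ℤ)) * D s (q * c) h := by
  have := RingHom.congr_fun (phi_tau q hq0 τ hτC hτX c) h
  simp only [RingHom.comp_apply] at this
  unfold D
  rw [this, scaleHom_coeff]

lemma D_zero_of_denom (s : ℕ) (hs : 1 ≤ s) (c : L) (p₁ p₂ : L[X]) (hp : p₂.eval c ≠ 0) :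
    D s c (algebraMap L[X] (RatFunc L) p₁ / algebraMap L[X] (RatFunc L) p₂) = 0 := by
  unfold D
  rw [phi_apply, RatFunc.laurent_div]
  set P₁ : PowerSeries L := ↑(Polynomial.taylor c p₁) with hP₁
  set P₂ : PowerSeries L := ↑(Polynomial.taylor c p₂) with hP₂
  have hc : PowerSeries.constantCoeff P₂ = p₂.eval c := by
    rw [hP₂, ← PowerSeries.coeff_zero_eq_constantCoeff_apply, Polynomial.coeff_coe,
      Polynomial.taylor_coeff_zero]
  have hu : IsUnit (PowerSeries.constantCoeff P₂) := by
    rw [hc]; exact (Units.mk0 _ hp).isUnit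
  set w : PowerSeries L := PowerSeries.invOfUnit P₂ hu.unit with hw
  have hmul : P₂ * w = 1 := PowerSeries.mul_invOfUnit P₂ hu.unit (by simp)
  have hcoe : ((algebraMap L[X] (RatFunc L) (Polynomial.taylor c p₁) /
      algebraMap L[X] (RatFunc L) (Polynomial.taylor c p₂) : RatFunc L) : LaurentSeries L)
      = ((P₁ * w : PowerSeries L) : LaurentSeries L) := by
    rw [map_div₀]
    have e1 : ((algebraMap L[X] (RatFunc L) (Polynomial.taylor c p₁) : RatFunc L)
        : LaurentSeries L) = (P₁ : LaurentSeries L) := by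
      rw [hP₁, RatFunc.coe_coe]; rfl
    have e2 : ((algebraMap L[X] (RatFunc L) (Polynomial.taylor c p₂) : RatFunc L)
        : LaurentSeries L) = (P₂ : LaurentSeries L) := by
      rw [hP₂, RatFunc.coe_coe]; rfl
    have hinv : ((P₂ : LaurentSeries L))⁻¹ = (w : LaurentSeries L) := by
      apply inv_eq_of_mul_eq_one_right
      rw [← PowerSeries.coe_mul, hmul, PowerSeries.coe_one]
    rw [e1, e2, div_eq_mul_inv, hinv, ← PowerSeries.coe_mul]
  rw [hcoe, PowerSeries.coeff_coe, if_pos]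
  omega

end Stmt3Aux

namespace Stmt3Aux

variable {L : Type*} [Field L]

lemma D_term_ne (s : ℕ) (hs : 1 ≤ s) (a u c : L) (huc : u ≠ c) :
    D s c (RatFunc.C a / (RatFunc.X - RatFunc.C u) ^ s) = 0 := by
  have h1 : RatFunc.C a = algebraMap L[X] (RatFunc L) (Polynomial.C a) := by
    rw [RatFunc.algebraMap_C]
  have h2 : (RatFunc.X - RatFunc.C u) ^ s
      = algebraMap L[X] (RatFunc L) ((Polynomial.X - Polynomial.C u) ^ s) := by
    rw [map_pow, map_sub, RatFunc.algebraMap_X, RatFunc.algebraMap_C]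
  rw [h1, h2]
  apply D_zero_of_denom s hs
  simp only [Polynomial.eval_pow, Polynomial.eval_sub, Polynomial.eval_X, Polynomial.eval_C]
  exact pow_ne_zero _ (sub_ne_zero.mpr (Ne.symm huc))

lemma D_term_eq (s : ℕ) (a c : L) :
    D s c (RatFunc.C a / (RatFunc.X - RatFunc.C c) ^ s) = a := by
  unfold D
  rw [map_div₀, map_pow, map_sub, phi_C, phi_X, phi_C]
  have h1 : (HahnSeries.single (1 : ℤ) (1 : L) + HahnSeries.C c - HahnSeries.C c) ^ s
      = HahnSeries.single (s : ℤ) (1 : L) := by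
    rw [add_sub_cancel_right, HahnSeries.single_pow]
    simp
  rw [h1]
  have h2 : (HahnSeries.single (s : ℤ) (1 : L))⁻¹ = HahnSeries.single (-(s : ℤ)) (1 : L) := by
    apply inv_eq_of_mul_eq_one_left
    rw [HahnSeries.single_mul_single, neg_add_cancel, mul_one, HahnSeries.single_zero_one]
  rw [div_eq_mul_inv, h2, HahnSeries.C_apply, HahnSeries.single_mul_single, zero_add, mul_one,
    HahnSeries.coeff_single_same]

lemma zpow_inj (q : L) (hq0 : q ≠ 0) (hq : ∀ n : ℕ, 0 < n → q ^ n ≠ 1)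
    {a b : ℤ} (hab : q ^ a = q ^ b) : a = b := by
  have h : q ^ (a - b) = 1 := by
    rw [zpow_sub₀ hq0, hab, div_self (zpow_ne_zero _ hq0)]
  have hnat : q ^ ((a - b).natAbs) = 1 := by
    rcases Int.natAbs_eq (a - b) with he | he
    · rw [he, zpow_natCast] at h; exact h
    · rw [he, zpow_neg, inv_eq_one, zpow_natCast] at h; exact h
  have : (a - b).natAbs = 0 := by
    by_contra hne
    exact hq _ (Nat.pos_of_ne_zero hne) hnat
  omega

end Stmt3Aux

namespace Stmt3Aux

variable {L : Type*} [Field L]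

lemma D_add (s : ℕ) (c : L) (h₁ h₂ : RatFunc L) :
    D s c (h₁ + h₂) = D s c h₁ + D s c h₂ := by
  unfold D; rw [map_add, HahnSeries.coeff_add]

lemma D_sum (s : ℕ) (c : L) {ι : Type*} (t : Finset ι) (F : ι → RatFunc L) :
    D s c (∑ i ∈ t, F i) = ∑ i ∈ t, D s c (F i) := by
  classical
  induction t using Finset.induction_on with
  | empty => simp [D, phi]
  | insert _ _ hnot ih =>
    rw [Finset.sum_insert hnot, Finset.sum_insert hnot, D_add, ih]

end Stmt3Aux


open Stmt3Aux in
/-- Lemma 2.9: let `q` be nonzero and not a root of unity, `β ≠ 0`, and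
`f = ∑_{ℓ=0}^d α_ℓ/(x - q^ℓ β)^s` over an algebraically closed field `L` of characteristic
zero (playing the role of the algebraic closure of `K`).  Then `f` is rational `q`-summable
(i.e. `f = g(qx) - g(x)` for some rational function `g`) if and only if
`∑_{ℓ=0}^d q^{-ℓ s} α_ℓ = 0`.  Here `τ` is the `q`-shift automorphism of `L(x)`,
characterized by fixing constants and sending `x` to `q x`. -/
theorem stmt3 {L : Type*} [Field L] [CharZero L] [IsAlgClosed L]
    (q : L) (hq0 : q ≠ 0) (hq : ∀ n : ℕ, 0 < n → q ^ n ≠ 1)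
    (d s : ℕ) (hs : 1 ≤ s) (α : ℕ → L) (β : L) (hβ : β ≠ 0)
    (f : RatFunc L)
    (hf : f = ∑ ℓ ∈ Finset.range (d + 1),
      RatFunc.C (α ℓ) / (RatFunc.X - RatFunc.C (q ^ ℓ * β)) ^ s)
    (τ : RatFunc L →+* RatFunc L)
    (hτC : ∀ a : L, τ (RatFunc.C a) = RatFunc.C a)
    (hτX : τ RatFunc.X = RatFunc.C q * RatFunc.X) :
    (∃ g : RatFunc L, f = τ g - g) ↔
      ∑ ℓ ∈ Finset.range (d + 1), q⁻¹ ^ (ℓ * s) * α ℓ = 0 := by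
  have hqs : (q : L) ^ s ≠ 0 := pow_ne_zero _ hq0
  set H : ℕ → RatFunc L := fun ℓ => ((RatFunc.X - RatFunc.C (q ^ ℓ * β)) ^ s)⁻¹ with hH
  have hτH : ∀ ℓ : ℕ, τ (H (ℓ + 1)) = RatFunc.C ((q ^ s)⁻¹) * H ℓ := by
    intro ℓ
    rw [hH]
    simp only [map_inv₀, map_pow, map_sub, hτX, hτC]
    have hfac : RatFunc.C q * RatFunc.X - RatFunc.C (q ^ (ℓ + 1) * β)
        = RatFunc.C q * (RatFunc.X - RatFunc.C (q ^ ℓ * β)) := by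
      rw [mul_sub, ← map_mul]
      congr 2
      rw [pow_succ']; ring
    rw [hfac, mul_pow, mul_inv, ← map_pow, ← map_inv₀]
  constructor
  · intro ⟨g, hg⟩
    have hptinj : ∀ a b : ℤ, q ^ a * β = q ^ b * β → a = b := fun a b h =>
      zpow_inj q hq0 hq (mul_right_cancel₀ hβ h)
    have hDf1 : ∀ m : ℕ, m ≤ d → D s (q ^ (m : ℤ) * β) f = α m := by
      intro m hm
      rw [hf, D_sum, Finset.sum_eq_single_of_mem m (Finset.mem_range.mpr (by omega))]
      · rw [zpow_natCast]
        exact D_term_eq s (α m) _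
      · intro j _ hjm
        apply D_term_ne s hs
        intro hcon
        rw [← zpow_natCast q j] at hcon
        exact hjm (by exact_mod_cast hptinj j m hcon)
    have hDf2 : ∀ ℓ : ℤ, ℓ < 0 ∨ (d : ℤ) < ℓ → D s (q ^ ℓ * β) f = 0 := by
      intro ℓ hℓ
      rw [hf, D_sum]
      apply Finset.sum_eq_zero
      intro j hj
      apply D_term_ne s hs
      intro hcon
      rw [← zpow_natCast q j] at hcon
      have := hptinj j ℓ hcon
      rw [Finset.mem_range] at hj
      omega
    set e : ℤ → L := fun ℓ => q ^ (-(ℓ * s)) * D s (q ^ ℓ * β) g with he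
    have hkey : ∀ ℓ : ℤ, q ^ (-(ℓ * s)) * D s (q ^ ℓ * β) f = e (ℓ + 1) - e ℓ := by
      intro ℓ
      rw [hg, D_sub, D_tau s q hq0 τ hτC hτX]
      have hpt : q * (q ^ ℓ * β) = q ^ (ℓ + 1) * β := by
        rw [zpow_add₀ hq0, zpow_one]; ring
      rw [hpt, mul_sub, he]
      simp only []
      congr 1
      rw [← mul_assoc, ← zpow_add₀ hq0]
      congr 2
      ring
    have hroot : ∀ ℓ : ℤ, D s (q ^ ℓ * β) g ≠ 0 → g.denom.eval (q ^ ℓ * β) = 0 := by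
      intro ℓ hne
      by_contra hev
      apply hne
      rw [← RatFunc.num_div_denom g]
      exact D_zero_of_denom s hs _ _ _ hev
    have hfin : {ℓ : ℤ | D s (q ^ ℓ * β) g ≠ 0}.Finite := by
      have hfr : {x : L | g.denom.IsRoot x}.Finite :=
        Polynomial.finite_setOf_isRoot (RatFunc.denom_ne_zero g)
      refine Set.Finite.subset (hfr.preimage (f := fun ℓ : ℤ => q ^ ℓ * β)
        (Set.injOn_of_injective fun a b hab => hptinj a b hab)) ?_
      intro ℓ h
      exact hroot ℓ h
    obtain ⟨A, hA⟩ := hfin.bddAbove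
    obtain ⟨B, hB⟩ := hfin.bddBelow
    set M : ℕ := d + A.natAbs + B.natAbs + 1 with hM
    have hDtop : D s (q ^ ((M : ℤ) + 1) * β) g = 0 := by
      by_contra h
      have h1 : ((M : ℤ) + 1) ≤ A := hA h
      have h2 : A ≤ A.natAbs := Int.le_natAbs
      omega
    have hDbot : D s (q ^ (-(M : ℤ)) * β) g = 0 := by
      by_contra h
      have h1 : B ≤ -(M : ℤ) := hB h
      have h2 : -(B.natAbs : ℤ) ≤ B := by
        rcases Int.natAbs_eq B with hB' | hB' <;> omega
      omega
    set N : ℕ := 2 * M + 1 with hN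
    set G : ℕ → L := fun j => q ^ (-((-(M : ℤ) + j) * s)) * D s (q ^ (-(M : ℤ) + j) * β) f
      with hG
    have htel : ∑ j ∈ Finset.range N, G j = e (-(M : ℤ) + N) - e (-(M : ℤ) + (0 : ℕ)) := by
      rw [← Finset.sum_range_sub (fun j : ℕ => e (-(M : ℤ) + j)) N]
      refine Finset.sum_congr rfl fun j _ => ?_
      rw [hG]
      simp only []
      rw [hkey (-(M : ℤ) + j)]
      congr 2
      push_cast
      ring
    have hzero : ∑ j ∈ Finset.range N, G j = 0 := by
      rw [htel]
      have h1 : e (-(M : ℤ) + N) = 0 := by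
        have : (-(M : ℤ) + N) = (M : ℤ) + 1 := by rw [hN]; push_cast; ring
        rw [he]; simp only []
        rw [this, hDtop, mul_zero]
      have h2 : e (-(M : ℤ) + (0 : ℕ)) = 0 := by
        have : (-(M : ℤ) + (0 : ℕ)) = -(M : ℤ) := by simp
        rw [he]; simp only []
        rw [this, hDbot, mul_zero]
      rw [h1, h2, sub_zero]
    have hT : ∑ ℓ ∈ Finset.range (d + 1), q⁻¹ ^ (ℓ * s) * α ℓ
        = ∑ m ∈ Finset.range (d + 1), G (M + m) := by
      refine Finset.sum_congr rfl fun m hm => ?_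
      rw [Finset.mem_range] at hm
      rw [hG]
      simp only []
      have hℓ : -(M : ℤ) + ((M + m : ℕ) : ℤ) = (m : ℤ) := by push_cast; ring
      rw [hℓ, hDf1 m (by omega)]
      have hexp : q⁻¹ ^ (m * s) = q ^ (-((m : ℤ) * s)) := by
        have hcast : -((m : ℤ) * s) = -(((m * s : ℕ) : ℤ)) := by push_cast; ring
        rw [hcast, zpow_neg, zpow_natCast, inv_pow]
      rw [hexp]
    have himg : ∑ m ∈ Finset.range (d + 1), G (M + m)
        = ∑ j ∈ (Finset.range (d + 1)).image (fun m => M + m), G j := by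
      rw [Finset.sum_image]
      intro a _ b _ hab
      beta_reduce at hab
      omega
    have hsub : ∑ j ∈ (Finset.range (d + 1)).image (fun m => M + m), G j
        = ∑ j ∈ Finset.range N, G j := by
      apply Finset.sum_subset
      · intro j hj
        simp only [Finset.mem_image, Finset.mem_range] at hj
        obtain ⟨m, hm, rfl⟩ := hj
        rw [Finset.mem_range, hN]
        omega
      · intro j hjN hjim
        simp only [Finset.mem_image, Finset.mem_range] at hjim hjN
        rw [hG]
        simp only []
        have : (-(M : ℤ) + j) < 0 ∨ (d : ℤ) < (-(M : ℤ) + j) := by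
          by_contra hcon
          push_neg at hcon
          exact hjim ⟨j - M, by omega, by omega⟩
        rw [hDf2 _ this, mul_zero]
    rw [hT, himg, hsub, hzero]
  · -- construct g
    intro hsum0
    set b : ℕ → L := fun m => q ^ (m * s) * ∑ j ∈ Finset.range m, q⁻¹ ^ (j * s) * α j with hb
    have hb0 : b 0 = 0 := by simp [hb]
    have hbrec : ∀ m : ℕ, (q ^ s)⁻¹ * b (m + 1) = α m + b m := by
      intro m
      rw [hb]
      simp only [Finset.sum_range_succ]
      rw [mul_add, mul_add]
      have h1 : (q ^ s)⁻¹ * (q ^ ((m + 1) * s) * (q⁻¹ ^ (m * s) * α m)) = α m := by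
        rw [add_mul, one_mul, _root_.pow_add, inv_pow]
        field_simp
      have h2 : (q ^ s)⁻¹ * (q ^ ((m + 1) * s) * ∑ j ∈ Finset.range m, q⁻¹ ^ (j * s) * α j)
          = q ^ (m * s) * ∑ j ∈ Finset.range m, q⁻¹ ^ (j * s) * α j := by
        rw [add_mul, one_mul, _root_.pow_add]
        field_simp
      rw [h1, h2]
      ring
    have hbd : b d = -α d := by
      rw [hb]
      have : ∑ j ∈ Finset.range d, q⁻¹ ^ (j * s) * α j = -(q⁻¹ ^ (d * s) * α d) := by
        have := hsum0
        rw [Finset.sum_range_succ] at this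
        linear_combination this
      show q ^ (d * s) * ∑ j ∈ Finset.range d, q⁻¹ ^ (j * s) * α j = -α d
      rw [this, inv_pow]
      field_simp
    refine ⟨∑ ℓ ∈ Finset.range d, RatFunc.C (b (ℓ + 1)) * H (ℓ + 1), ?_⟩
    rw [map_sum]
    have hτg : ∀ ℓ ∈ Finset.range d, τ (RatFunc.C (b (ℓ + 1)) * H (ℓ + 1))
        = RatFunc.C (α ℓ) * H ℓ + RatFunc.C (b ℓ) * H ℓ := by
      intro ℓ _
      rw [map_mul, hτC, hτH, ← mul_assoc, ← map_mul, mul_comm (b (ℓ + 1)) ((q ^ s)⁻¹), hbrec,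
        map_add, add_mul]
    rw [Finset.sum_congr rfl hτg]
    have hgsum : ∑ ℓ ∈ Finset.range d, RatFunc.C (b (ℓ + 1)) * H (ℓ + 1)
        = ∑ ℓ ∈ Finset.range (d + 1), RatFunc.C (b ℓ) * H ℓ := by
      rw [Finset.sum_range_succ' (fun ℓ => RatFunc.C (b ℓ) * H ℓ) d, hb0]
      simp
    rw [hgsum, Finset.sum_add_distrib, Finset.sum_range_succ (fun ℓ => RatFunc.C (b ℓ) * H ℓ) d,
      hbd, hf]
    have hfH : ∑ ℓ ∈ Finset.range (d + 1),
        RatFunc.C (α ℓ) / (RatFunc.X - RatFunc.C (q ^ ℓ * β)) ^ s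
        = ∑ ℓ ∈ Finset.range (d + 1), RatFunc.C (α ℓ) * H ℓ := by
      refine Finset.sum_congr rfl fun ℓ _ => ?_
      rw [div_eq_mul_inv, hH]
    rw [hfH, Finset.sum_range_succ (fun ℓ => RatFunc.C (α ℓ) * H ℓ) d]
    rw [map_neg]
    ring
end

section
/- Let k be an algebraically closed field of characteristic zero and f an element of the algebraic closure of k(t). If f(t+n) = f(t) for some positive integer n (i.e., S_t^n(f) = f for an extension S_t of the shift automorphism), then f ∈ k. -/
open Polynomial
open scoped nonZeroDivisors
set_option linter.unusedSectionVars false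

namespace Stmt9Aux

variable {k : Type*} [Field k] [CharZero k]

/-- A polynomial invariant under a nonzero shift is constant. -/
lemma poly_fixed {m : k} (hm : m ≠ 0) {p : k[X]} (hp : p.comp (X + C m) = p) :
    ∃ c : k, p = C c := by
  have heval : ∀ x : k, p.eval (x + m) = p.eval x := fun x => by
    conv_rhs => rw [← hp]
    simp [eval_comp]
  have hiter : ∀ j : ℕ, p.eval ((j : k) * m) = p.eval 0 := by
    intro j; induction j with
    | zero => simp
    | succ j ih =>
      push_cast
      rw [add_mul, one_mul, heval, ih]
  refine ⟨p.eval 0, ?_⟩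
  have hq0 : p - C (p.eval 0) = 0 := by
    apply eq_zero_of_infinite_isRoot
    apply Set.infinite_of_injective_forall_mem (f := fun j : ℕ => (j : k) * m)
    · intro a b hab
      have : ((a : k)) = b := mul_right_cancel₀ hm hab
      exact_mod_cast this
    · intro j
      simp only [Set.mem_setOf_eq, IsRoot, eval_sub, eval_C, hiter j, sub_self]
  exact sub_eq_zero.mp hq0

lemma hNZD (e : k[X] ≃ₐ[k] k[X]) : k[X]⁰ ≤ (k[X]⁰).comap e := by
  intro q hq
  rw [Submonoid.mem_comap, mem_nonZeroDivisors_iff_ne_zero]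
  rw [mem_nonZeroDivisors_iff_ne_zero] at hq
  simpa using hq

/-- The ring endomorphism of `RatFunc k` induced by a polynomial algebra automorphism. -/
noncomputable def tau (e : k[X] ≃ₐ[k] k[X]) : RatFunc k →+* RatFunc k :=
  RatFunc.mapRingHom e (hNZD e)

lemma tau_algebraMap (e : k[X] ≃ₐ[k] k[X]) (p : k[X]) :
    tau e (algebraMap k[X] (RatFunc k) p) = algebraMap k[X] (RatFunc k) (e p) := by
  have h := RatFunc.map_apply_div (φ := e) (hNZD e) p 1
  show RatFunc.map e (hNZD e) _ = _
  simpa using h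


lemma ratfunc_fixed {m : k} (hm : m ≠ 0) {g : RatFunc k}
    (hg : tau (algEquivAevalXAddC m) g = g) : ∃ c : k, g = RatFunc.C c := by
  set e := algEquivAevalXAddC m with he
  have hcomp : ∀ q : k[X], e q = q.comp (X + C m) := fun q => by
    rw [he, algEquivAevalXAddC_apply, ← comp_eq_aeval]
  set N := g.num with hN
  set D := g.denom with hD
  have hA : Function.Injective (algebraMap k[X] (RatFunc k)) :=
    IsFractionRing.injective k[X] (RatFunc k)
  have hDne : (algebraMap k[X] (RatFunc k)) D ≠ 0 := by
    simpa using (RatFunc.denom_ne_zero g)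
  have heDne0 : e D ≠ 0 := by
    simpa using (RatFunc.denom_ne_zero g)
  have heDne : (algebraMap k[X] (RatFunc k)) (e D) ≠ 0 := by
    simpa using heDne0
  have hcross : e N * D = N * e D := by
    apply hA
    have h2 : tau e g = algebraMap _ _ (e N) / algebraMap _ _ (e D) := by
      conv_lhs => rw [← RatFunc.num_div_denom g]
      exact RatFunc.map_apply_div (φ := e) (hNZD e) N D
    rw [hg] at h2
    conv_lhs at h2 => rw [← RatFunc.num_div_denom g]
    rw [div_eq_div_iff hDne heDne] at h2
    rw [map_mul, map_mul]
    linear_combination -h2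
  -- D divides e D
  have hdvd : D ∣ N * e D := by
    rw [← hcross]; exact Dvd.intro_left _ rfl
  have hcop : IsCoprime D N := (RatFunc.isCoprime_num_denom g).symm
  have hDdvd : D ∣ e D := by
    refine hcop.dvd_of_dvd_mul_right ?_
    rwa [mul_comm] at hdvd
  have hDm : D.Monic := RatFunc.monic_denom g
  have heDm : (e D).Monic := by
    rw [hcomp]; exact hDm.comp_X_add_C m
  have hnd : (e D).natDegree = D.natDegree := by
    rw [hcomp, natDegree_comp, natDegree_X_add_C, mul_one]
  have heDD : e D = D := eq_of_monic_of_dvd_of_natDegree_le hDm heDm hDdvd hnd.le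
  have heNN : e N = N := by
    have : e N * D = N * D := by rw [hcross, heDD]
    exact mul_right_cancel₀ (by simpa using RatFunc.denom_ne_zero g) this
  obtain ⟨c, hc⟩ := poly_fixed hm (p := N) (by rw [← hcomp, heNN])
  obtain ⟨d, hd⟩ := poly_fixed hm (p := D) (by rw [← hcomp, heDD])
  have hD1 : D = 1 := by
    have h0 : D.natDegree = 0 := by rw [hd]; exact natDegree_C d
    have := hDm.leadingCoeff
    rw [leadingCoeff, h0] at this
    rw [hd] at this ⊢
    simp only [coeff_C_zero] at this
    rw [this, map_one]
  refine ⟨c, ?_⟩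
  rw [← RatFunc.num_div_denom g, ← hN, ← hD, hD1, hc, map_one, div_one, RatFunc.algebraMap_C]


lemma Epow_eq (n : ℕ) :
    ((algEquivAevalXAddC (1 : k)) ^ n : k[X] ≃ₐ[k] k[X]) = algEquivAevalXAddC (n : k) := by
  induction n with
  | zero =>
    refine AlgEquiv.ext fun p => ?_
    show p = _
    simp [← comp_eq_aeval]
  | succ n ih =>
    refine AlgEquiv.ext fun p => ?_
    have h1 : ((algEquivAevalXAddC (1 : k)) ^ (n+1)) p
        = ((algEquivAevalXAddC (1 : k)) ^ n) ((algEquivAevalXAddC (1:k)) p) := by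
      rw [pow_succ]; rfl
    rw [h1, ih, algEquivAevalXAddC_apply, algEquivAevalXAddC_apply,
      algEquivAevalXAddC_apply, ← comp_eq_aeval, ← comp_eq_aeval, ← comp_eq_aeval, comp_assoc]
    congr 1
    simp only [add_comp, X_comp, C_comp, add_assoc, ← C_add]
    push_cast
    ring_nf

end Stmt9Aux

open Stmt9Aux in
/-- Lemma 3.4(i): let `k` be algebraically closed of characteristic zero and `σ` an
extension to the algebraic closure of `k(t)` of the shift automorphism `t ↦ t+1` of
`k(t)` (characterized by fixing `k` and sending `t` to `t+1`).  If `σ^n f = f` for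
some positive integer `n`, then `f ∈ k`. -/
theorem stmt9 {k : Type*} [Field k] [CharZero k] [IsAlgClosed k]
    (σ : RingAut (AlgebraicClosure (RatFunc k)))
    (hσk : ∀ a : k, σ (algebraMap (RatFunc k) (AlgebraicClosure (RatFunc k)) (RatFunc.C a))
      = algebraMap (RatFunc k) (AlgebraicClosure (RatFunc k)) (RatFunc.C a))
    (hσt : σ (algebraMap (RatFunc k) (AlgebraicClosure (RatFunc k)) RatFunc.X)
      = algebraMap (RatFunc k) (AlgebraicClosure (RatFunc k)) RatFunc.X + 1)
    (f : AlgebraicClosure (RatFunc k)) (n : ℕ) (hn : 0 < n)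
    (hf : (σ ^ n) f = f) :
    ∃ c : k, f = algebraMap (RatFunc k) (AlgebraicClosure (RatFunc k)) (RatFunc.C c) := by
  classical
  set A : RatFunc k →+* AlgebraicClosure (RatFunc k)
      := algebraMap (RatFunc k) (AlgebraicClosure (RatFunc k)) with hAdef
  have hint : IsIntegral (RatFunc k) f := (Algebra.IsAlgebraic.isAlgebraic f).isIntegral
  set p := minpoly (RatFunc k) f with hpdef
  set E := Polynomial.algEquivAevalXAddC (1 : k) with hE
  -- base case of the commutation relation
  have base : ∀ r : Polynomial k, σ (A (algebraMap (Polynomial k) (RatFunc k) r))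
      = A (algebraMap (Polynomial k) (RatFunc k) (E r)) := by
    have hhom : (σ : AlgebraicClosure (RatFunc k) →+* AlgebraicClosure (RatFunc k)).comp (A.comp (algebraMap (Polynomial k) (RatFunc k)))
        = (A.comp (algebraMap (Polynomial k) (RatFunc k))).comp
            (E.toAlgHom.toRingHom) := by
      apply Polynomial.ringHom_ext
      · intro a
        have hECa : E (Polynomial.C a) = Polynomial.C a := by
          simp [hE, ← Polynomial.comp_eq_aeval]
        show σ (A ((algebraMap (Polynomial k) (RatFunc k)) (Polynomial.C a)))
            = A ((algebraMap (Polynomial k) (RatFunc k)) (E (Polynomial.C a)))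
        rw [hECa, RatFunc.algebraMap_C]
        exact hσk a
      · have hEX : E Polynomial.X = Polynomial.X + Polynomial.C 1 := by
          simp [hE, ← Polynomial.comp_eq_aeval]
        show σ (A ((algebraMap (Polynomial k) (RatFunc k)) Polynomial.X))
            = A ((algebraMap (Polynomial k) (RatFunc k)) (E Polynomial.X))
        rw [hEX, map_add, RatFunc.algebraMap_X, RatFunc.algebraMap_C, map_add,
          map_one, map_one]
        exact hσt
    intro r
    exact RingHom.congr_fun hhom r
  -- iterate
  have key1 : ∀ (m : ℕ) (q : Polynomial k),
      (σ ^ m) (A (algebraMap (Polynomial k) (RatFunc k) q))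
        = A (algebraMap (Polynomial k) (RatFunc k) ((E ^ m) q)) := by
    intro m
    induction m with
    | zero => intro q; rfl
    | succ m ih =>
      intro q
      have h1 : (σ ^ (m+1)) (A (algebraMap (Polynomial k) (RatFunc k) q))
          = σ ((σ ^ m) (A (algebraMap (Polynomial k) (RatFunc k) q))) := by
        rw [pow_succ']; rfl
      rw [h1, ih, base]
      have h2 : (E ^ (m+1)) q = E ((E ^ m) q) := by rw [pow_succ']; rfl
      rw [h2]
  set τn := Stmt9Aux.tau (E ^ n) with hτn
  have key2 : ((σ ^ n : RingAut (AlgebraicClosure (RatFunc k))) : AlgebraicClosure (RatFunc k) →+* AlgebraicClosure (RatFunc k)).comp A = A.comp τn := by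
    apply IsLocalization.ringHom_ext (Polynomial k)⁰
    refine RingHom.ext fun q => ?_
    simp only [RingHom.coe_comp, Function.comp_apply]
    rw [hτn, Stmt9Aux.tau_algebraMap]
    exact key1 n q
  -- the minimal polynomial is fixed coefficientwise
  have haev : Polynomial.aeval f (p.map τn) = 0 := by
    rw [Polynomial.aeval_def, Polynomial.eval₂_map, ← key2]
    calc Polynomial.eval₂ (((σ ^ n : RingAut (AlgebraicClosure (RatFunc k))) : AlgebraicClosure (RatFunc k) →+* AlgebraicClosure (RatFunc k)).comp A) f p
        = Polynomial.eval₂ (((σ ^ n : RingAut (AlgebraicClosure (RatFunc k))) : AlgebraicClosure (RatFunc k) →+* AlgebraicClosure (RatFunc k)).comp A) ((σ ^ n) f) p := by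
          rw [hf]
      _ = ((σ ^ n : RingAut (AlgebraicClosure (RatFunc k))) : AlgebraicClosure (RatFunc k) →+* AlgebraicClosure (RatFunc k)) (Polynomial.eval₂ A f p) :=
          (Polynomial.hom_eval₂ p A ((σ ^ n : RingAut (AlgebraicClosure (RatFunc k))) : AlgebraicClosure (RatFunc k) →+* AlgebraicClosure (RatFunc k)) f).symm
      _ = 0 := by
          rw [← Polynomial.aeval_def, hpdef, minpoly.aeval, map_zero]
  have hmonic : p.Monic := minpoly.monic hint
  have hmapmonic : (p.map τn).Monic := hmonic.map τn
  have hdvd : p ∣ p.map τn := minpoly.dvd _ f haev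
  have hdeg : (p.map τn).natDegree ≤ p.natDegree := by
    rw [Polynomial.natDegree_map_eq_of_injective τn.injective]
  have hkey3 : p.map τn = p :=
    Polynomial.eq_of_monic_of_dvd_of_natDegree_le hmonic hmapmonic hdvd hdeg
  have hcoeff : ∀ i, ∃ c : k, p.coeff i = RatFunc.C c := by
    intro i
    have h1 : τn (p.coeff i) = p.coeff i := by
      conv_rhs => rw [← hkey3]
      rw [Polynomial.coeff_map]
    rw [hτn, hE, Stmt9Aux.Epow_eq] at h1
    exact Stmt9Aux.ratfunc_fixed (Nat.cast_ne_zero.mpr hn.ne') h1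
  -- lift the minimal polynomial to `k`
  have hlift : p ∈ Polynomial.lifts (RatFunc.C : k →+* RatFunc k) := by
    rw [Polynomial.lifts_iff_coeff_lifts]
    intro i
    obtain ⟨c, hc⟩ := hcoeff i
    exact ⟨c, hc.symm⟩
  obtain ⟨P, hP⟩ := (Polynomial.mem_lifts p).mp hlift
  have hpne : p ≠ 0 := minpoly.ne_zero hint
  have hPne : P ≠ 0 := fun h => hpne (by rw [← hP, h, Polynomial.map_zero])
  set ψ : k →+* AlgebraicClosure (RatFunc k) := A.comp (RatFunc.C : k →+* RatFunc k) with hψ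
  have hψinj : Function.Injective ψ := ψ.injective
  have hroot : (P.map ψ).eval f = 0 := by
    rw [Polynomial.eval_map, hψ, ← Polynomial.eval₂_map, hP, ← Polynomial.aeval_def,
      hpdef, minpoly.aeval]
  have hPmapne : P.map ψ ≠ 0 := by
    rwa [Ne, Polynomial.map_eq_zero_iff hψinj]
  have hmem : f ∈ (P.map ψ).roots := Polynomial.mem_roots'.mpr ⟨hPmapne, hroot⟩
  rw [(IsAlgClosed.splits P).roots_map ψ] at hmem
  obtain ⟨c, _, hcf⟩ := Multiset.mem_map.mp hmem
  exact ⟨c, hcf.symm⟩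
end

section
/- Let k be an algebraically closed field of characteristic zero and q ∈ k not a root of unity. If f in the algebraic closure of k(t) satisfies Q_t^n(f) = f for some positive integer n (Q_t an extension of t ↦ qt), then f ∈ k. -/
open Polynomial
open scoped nonZeroDivisors

section Aux

variable {k : Type*} [Field k]

/-- The substitution `X ↦ c • X` on polynomials, as a ring hom. -/
noncomputable def scaleH (c : k) : k[X] →+* k[X] :=
  eval₂RingHom Polynomial.C (Polynomial.C c * Polynomial.X)

lemma scaleH_apply (c : k) (p : k[X]) :
    scaleH c p = p.comp (Polynomial.C c * Polynomial.X) := rfl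

lemma scaleH_coeff (c : k) (p : k[X]) (i : ℕ) :
    (scaleH c p).coeff i = c ^ i * p.coeff i := by
  induction p using Polynomial.induction_on' with
  | add p q hp hq => simp [map_add, hp, hq, mul_add]
  | monomial m a =>
    rw [scaleH_apply, monomial_comp, mul_pow, ← Polynomial.C_pow, ← mul_assoc,
      ← Polynomial.C_mul, coeff_C_mul, coeff_X_pow, coeff_monomial]
    by_cases h : i = m
    · subst h
      rw [if_pos rfl, if_pos rfl, mul_one]
      ring
    · rw [if_neg h, if_neg (Ne.symm h), mul_zero, mul_zero]

lemma scaleH_ne_zero {c : k} (hc : c ≠ 0) {p : k[X]} (hp : p ≠ 0) :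
    scaleH c p ≠ 0 := by
  rw [scaleH_apply, Ne, comp_eq_zero_iff]
  push_neg
  refine ⟨hp, fun _ => ?_⟩
  intro h
  apply hc
  have := congrArg (fun r => Polynomial.coeff r 1) h
  simpa using this

lemma scaleH_mem_comap {c : k} (hc : c ≠ 0) :
    k[X]⁰ ≤ Submonoid.comap (scaleH c) k[X]⁰ := by
  intro p hp
  simp only [Submonoid.mem_comap, mem_nonZeroDivisors_iff_ne_zero] at hp ⊢
  exact scaleH_ne_zero hc hp

lemma scaleH_natDegree {c : k} (hc : c ≠ 0) (p : k[X]) :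
    (scaleH c p).natDegree = p.natDegree := by
  rw [scaleH_apply, natDegree_comp, natDegree_C_mul_X c hc, mul_one]

lemma pow_right_injective_of_not_root_of_unity {c : k} (hc0 : c ≠ 0)
    (hc : ∀ m : ℕ, 0 < m → c ^ m ≠ 1) {i j : ℕ} (h : c ^ i = c ^ j) : i = j := by
  rcases lt_trichotomy i j with hij | hij | hij
  · exfalso
    apply hc (j - i) (Nat.sub_pos_of_lt hij)
    have : c ^ i * c ^ (j - i) = c ^ i * 1 := by
      rw [mul_one, ← pow_add, Nat.add_sub_cancel' hij.le, h]
    exact mul_left_cancel₀ (pow_ne_zero _ hc0) this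
  · exact hij
  · exfalso
    apply hc (i - j) (Nat.sub_pos_of_lt hij)
    have : c ^ j * c ^ (i - j) = c ^ j * 1 := by
      rw [mul_one, ← pow_add, Nat.add_sub_cancel' hij.le, h]
    exact mul_left_cancel₀ (pow_ne_zero _ hc0) this

/-- If a polynomial satisfies `scaleH c p = p * C e` then it is a monomial. -/
lemma eq_monomial_of_scaleH {c : k} (hc0 : c ≠ 0)
    (hc : ∀ m : ℕ, 0 < m → c ^ m ≠ 1) {p : k[X]} (hp : p ≠ 0) {e : k}
    (h : scaleH c p = p * Polynomial.C e) :
    p = Polynomial.C p.leadingCoeff * Polynomial.X ^ p.natDegree ∧ e = c ^ p.natDegree := by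
  have hcoeff : ∀ i, c ^ i * p.coeff i = p.coeff i * e := fun i => by
    have := congrArg (fun r => Polynomial.coeff r i) h
    simpa [scaleH_coeff, coeff_mul_C] using this
  have hlead : e = c ^ p.natDegree := by
    have h1 := hcoeff p.natDegree
    have hl : p.coeff p.natDegree ≠ 0 := by
      rw [← Polynomial.leadingCoeff]
      exact leadingCoeff_ne_zero.mpr hp
    rw [mul_comm (c ^ p.natDegree) (p.coeff p.natDegree)] at h1
    exact (mul_left_cancel₀ hl h1).symm
  subst hlead
  refine ⟨?_, rfl⟩
  ext i
  rw [coeff_C_mul, coeff_X_pow]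
  rcases eq_or_ne i p.natDegree with rfl | hi
  · rw [if_pos rfl, mul_one]
    rfl
  · have h3 := hcoeff i
    have hzero : p.coeff i = 0 := by
      by_contra hne
      have h4 : c ^ i = c ^ p.natDegree := by
        have h2 : p.coeff i * c ^ i = p.coeff i * c ^ p.natDegree := by
          rw [mul_comm (p.coeff i) (c ^ i), h3]
        exact mul_left_cancel₀ hne h2
      exact hi (pow_right_injective_of_not_root_of_unity hc0 hc h4)
    rw [hzero, if_neg hi, mul_zero]

/-- A rational function fixed by the scaling `X ↦ c X` (with `c` not a root of unity)
is constant. -/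
lemma fixed_of_scaleH {c : k} (hc0 : c ≠ 0)
    (hc : ∀ m : ℕ, 0 < m → c ^ m ≠ 1) {r : RatFunc k}
    (hr : RatFunc.map (scaleH c) (scaleH_mem_comap hc0) r = r) :
    ∃ a : k, r = RatFunc.C a := by
  rcases eq_or_ne r 0 with rfl | hr0
  · exact ⟨0, by simp⟩
  set p := r.num with hpdef
  set s := r.denom with hsdef
  have hp0 : p ≠ 0 := RatFunc.num_ne_zero hr0
  have hs0 : s ≠ 0 := r.denom_ne_zero
  have hsmonic : s.Monic := r.monic_denom
  have key : algebraMap k[X] (RatFunc k) (scaleH c p) / algebraMap k[X] (RatFunc k) (scaleH c s)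
      = r := by
    rw [← RatFunc.map_apply_div (scaleH c) (scaleH_mem_comap hc0) p s]
    rw [RatFunc.num_div_denom]
    exact hr
  -- divisibility facts
  have hsd : s ∣ scaleH c s := by
    have := RatFunc.denom_div_dvd (scaleH c p) (scaleH c s)
    rwa [key] at this
  have hpd : p ∣ scaleH c p := by
    have := RatFunc.num_div_dvd (scaleH c p) (scaleH_ne_zero hc0 hs0)
    rwa [key] at this
  -- turn them into `scaleH c s = s * C e` etc.
  have hmul : ∀ u : k[X], u ≠ 0 → u ∣ scaleH c u → ∃ e : k, scaleH c u = u * Polynomial.C e := by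
    intro u hu ⟨t, ht⟩
    have hsu : scaleH c u ≠ 0 := scaleH_ne_zero hc0 hu
    have ht0 : t ≠ 0 := by rintro rfl; simp [ht] at hsu
    have hdeg : t.natDegree = 0 := by
      have := scaleH_natDegree hc0 u
      rw [ht, natDegree_mul hu ht0] at this
      omega
    exact ⟨t.coeff 0, by rw [ht]; congr 1; exact Polynomial.eq_C_of_natDegree_eq_zero hdeg⟩
  obtain ⟨e, he⟩ := hmul s hs0 hsd
  obtain ⟨e', he'⟩ := hmul p hp0 hpd
  obtain ⟨hpmono, he'val⟩ := eq_monomial_of_scaleH hc0 hc hp0 he'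
  obtain ⟨hsmono, heval⟩ := eq_monomial_of_scaleH hc0 hc hs0 he
  rw [hsmonic.leadingCoeff, map_one, one_mul] at hsmono
  -- the cross-multiplied identity
  have hcross : scaleH c p * s = p * scaleH c s := by
    have h1 : algebraMap k[X] (RatFunc k) (scaleH c p) / algebraMap k[X] (RatFunc k) (scaleH c s)
        = algebraMap k[X] (RatFunc k) p / algebraMap k[X] (RatFunc k) s := by
      rw [key, ← RatFunc.num_div_denom r]
    rw [div_eq_div_iff (RatFunc.algebraMap_ne_zero (scaleH_ne_zero hc0 hs0))
      (RatFunc.algebraMap_ne_zero hs0)] at h1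
    exact RatFunc.algebraMap_injective k (by rw [map_mul, map_mul]; exact h1)
  rw [he, he', heval, he'val] at hcross
  have hps : p * s ≠ 0 := mul_ne_zero hp0 hs0
  have hpow : c ^ p.natDegree = c ^ s.natDegree := by
    have h2 : p * s * Polynomial.C (c ^ p.natDegree) = p * s * Polynomial.C (c ^ s.natDegree) := by
      linear_combination hcross
    have := mul_left_cancel₀ hps h2
    exact Polynomial.C_injective this
  have hdeq : p.natDegree = s.natDegree :=
    pow_right_injective_of_not_root_of_unity hc0 hc hpow
  -- coprimality forces degree zero
  have hd0 : s.natDegree = 0 := by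
    by_contra hd
    have hd' : 0 < s.natDegree := Nat.pos_of_ne_zero hd
    have hXs : Polynomial.X ∣ s := by
      rw [hsmono]
      exact dvd_pow_self _ (by omega)
    have hXp : Polynomial.X ∣ p := by
      rw [hpmono, hdeq]
      exact Dvd.dvd.mul_left (dvd_pow_self _ (by omega)) _
    exact Polynomial.not_isUnit_X (r.isCoprime_num_denom.isUnit_of_dvd' hXp hXs)
  have hs1 : s = 1 := by rw [hsmono, hd0, pow_zero]
  have hp1 : p = Polynomial.C p.leadingCoeff := by
    conv_lhs => rw [hpmono, hdeq, hd0]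
    rw [pow_zero, mul_one]
  obtain ⟨b, hb⟩ : ∃ b : k, p = Polynomial.C b := ⟨p.leadingCoeff, hp1⟩
  refine ⟨b, ?_⟩
  conv_lhs => rw [← RatFunc.num_div_denom r, ← hpdef, ← hsdef, hs1, hb]
  rw [map_one, div_one, RatFunc.algebraMap_C]

end Aux

/-- Lemma 3.4(ii): let `k` be algebraically closed of characteristic zero, `q ∈ k` not a
root of unity, and `σ` an extension to the algebraic closure of `k(t)` of the `q`-shift
automorphism `t ↦ qt` of `k(t)`.  If `σ^n f = f` for some positive integer `n`, then
`f ∈ k`. -/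
theorem stmt10 {k : Type*} [Field k] [CharZero k] [IsAlgClosed k]
    (q : k) (hq0 : q ≠ 0) (hq : ∀ n : ℕ, 0 < n → q ^ n ≠ 1)
    (σ : RingAut (AlgebraicClosure (RatFunc k)))
    (hσk : ∀ a : k, σ (algebraMap (RatFunc k) (AlgebraicClosure (RatFunc k)) (RatFunc.C a))
      = algebraMap (RatFunc k) (AlgebraicClosure (RatFunc k)) (RatFunc.C a))
    (hσt : σ (algebraMap (RatFunc k) (AlgebraicClosure (RatFunc k)) RatFunc.X)
      = algebraMap (RatFunc k) (AlgebraicClosure (RatFunc k)) (RatFunc.C q) *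
        algebraMap (RatFunc k) (AlgebraicClosure (RatFunc k)) RatFunc.X)
    (f : AlgebraicClosure (RatFunc k)) (n : ℕ) (hn : 0 < n)
    (hf : (σ ^ n) f = f) :
    ∃ c : k, f = algebraMap (RatFunc k) (AlgebraicClosure (RatFunc k)) (RatFunc.C c) := by
  classical
  set A : RatFunc k →+* AlgebraicClosure (RatFunc k)
    := algebraMap (RatFunc k) (AlgebraicClosure (RatFunc k)) with hA
  -- Step 1: σ acting on the image of `RatFunc k` is the scaling by `q`.
  have hpoly : ∀ p : k[X], σ (A (algebraMap k[X] (RatFunc k) p))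
      = A (algebraMap k[X] (RatFunc k) (scaleH q p)) := by
    have hext : (σ : AlgebraicClosure (RatFunc k) →+* AlgebraicClosure (RatFunc k)).comp (A.comp (algebraMap k[X] (RatFunc k)))
        = (A.comp (algebraMap k[X] (RatFunc k))).comp (scaleH q) := by
      apply Polynomial.ringHom_ext
      · intro a
        simp only [RingHom.coe_comp, Function.comp_apply, RatFunc.algebraMap_C]
        have hCa : scaleH q (Polynomial.C a) = Polynomial.C a := by
          rw [scaleH_apply, C_comp]
        rw [hCa, RatFunc.algebraMap_C]
        exact hσk a
      · simp only [RingHom.coe_comp, Function.comp_apply, RatFunc.algebraMap_X]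
        have hX : scaleH q Polynomial.X = Polynomial.C q * Polynomial.X := by
          rw [scaleH_apply, X_comp]
        rw [hX, map_mul, RatFunc.algebraMap_C, RatFunc.algebraMap_X, map_mul]
        exact hσt
    intro p
    exact RingHom.congr_fun hext p
  have hσA : ∀ r : RatFunc k,
      σ (A r) = A (RatFunc.map (scaleH q) (scaleH_mem_comap hq0) r) := by
    intro r
    conv_lhs => rw [← RatFunc.num_div_denom r]
    rw [map_div₀, map_div₀, hpoly, hpoly, ← map_div₀,
      ← RatFunc.map_apply_div (scaleH q) (scaleH_mem_comap hq0), RatFunc.num_div_denom]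
  -- Step 2: iterate.
  have hqm0 : ∀ m : ℕ, (q ^ m : k) ≠ 0 := fun m => pow_ne_zero m hq0
  have hscale_comp : ∀ (a b : k) (p : k[X]),
      scaleH a (scaleH b p) = scaleH (b * a) p := by
    intro a b p
    rw [scaleH_apply, scaleH_apply, scaleH_apply, Polynomial.comp_assoc, mul_comp, C_comp,
      X_comp, ← mul_assoc, ← Polynomial.C_mul]
  have hmap_poly : ∀ (c : k) (hc : c ≠ 0) (p : k[X]),
      RatFunc.map (scaleH c) (scaleH_mem_comap hc) (algebraMap k[X] (RatFunc k) p)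
        = algebraMap k[X] (RatFunc k) (scaleH c p) := by
    intro c hc p
    have := RatFunc.map_apply_div (scaleH c) (scaleH_mem_comap hc) p 1
    simpa using this
  have hiter : ∀ (m : ℕ) (r : RatFunc k),
      (σ ^ m) (A r) = A (RatFunc.map (scaleH (q ^ m)) (scaleH_mem_comap (hqm0 m)) r) := by
    intro m
    induction m with
    | zero =>
      intro r
      conv_rhs => rw [← RatFunc.num_div_denom r]
      rw [RatFunc.map_apply_div]
      have h1 : ∀ p : k[X], scaleH ((q : k) ^ 0) p = p := by
        intro p
        rw [pow_zero, scaleH_apply]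
        simp
      rw [h1, h1, RatFunc.num_div_denom, pow_zero]
      rfl
    | succ m ih =>
      intro r
      have hstep : (σ ^ (m + 1)) (A r) = (σ ^ m) (σ (A r)) := by
        rw [pow_succ]
        rfl
      rw [hstep, hσA r, ih]
      -- now reduce to polynomials
      conv_lhs => rw [← RatFunc.num_div_denom r]
      conv_rhs => rw [← RatFunc.num_div_denom r]
      rw [RatFunc.map_apply_div, RatFunc.map_apply_div, hscale_comp, hscale_comp,
        RatFunc.map_apply_div, show q * q ^ m = q ^ (m + 1) from (pow_succ' q m).symm]
  -- Step 3: the minimal polynomial of `f` has coefficients fixed by the scaling by `q^n`.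
  have halg : Algebra.IsAlgebraic (RatFunc k) (AlgebraicClosure (RatFunc k)) := AlgebraicClosure.isAlgebraic _
  have hint : IsIntegral (RatFunc k) f := (Algebra.IsAlgebraic.isAlgebraic f).isIntegral
  set P : (RatFunc k)[X] := minpoly (RatFunc k) f with hPdef
  have hPmonic : P.Monic := minpoly.monic hint
  have hP0 : P ≠ 0 := hPmonic.ne_zero
  set g : RatFunc k →+* RatFunc k :=
    RatFunc.mapRingHom (scaleH (q ^ n)) (scaleH_mem_comap (hqm0 n)) with hgdef
  have hg_apply : ∀ r : RatFunc k,
      g r = RatFunc.map (scaleH (q ^ n)) (scaleH_mem_comap (hqm0 n)) r := fun r => rfl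
  have hAg : A.comp g = ((σ ^ n : RingAut (AlgebraicClosure (RatFunc k))) : AlgebraicClosure (RatFunc k) →+* AlgebraicClosure (RatFunc k)).comp A := by
    ext r
    simp only [RingHom.coe_comp, Function.comp_apply]
    rw [hg_apply, ← hiter n r]
    rfl
  have hroot : Polynomial.aeval f (P.map g) = 0 := by
    rw [Polynomial.aeval_def, Polynomial.eval₂_map, ← hA, hAg]
    conv_lhs => rw [← hf]
    rw [show ((σ ^ n) f)
        = ((σ ^ n : RingAut (AlgebraicClosure (RatFunc k))) :
            AlgebraicClosure (RatFunc k) →+* AlgebraicClosure (RatFunc k)) f from rfl,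
      ← Polynomial.hom_eval₂]
    have : Polynomial.eval₂ A f P = 0 := by
      rw [← Polynomial.aeval_def, hPdef, minpoly.aeval]
    rw [this, map_zero]
  have hdvd : P ∣ P.map g := minpoly.dvd (RatFunc k) f hroot
  have hPmap_monic : (P.map g).Monic := hPmonic.map g
  have hPfix : P.map g = P := by
    obtain ⟨t, ht⟩ := hdvd
    have ht0 : t ≠ 0 := by
      rintro rfl
      rw [mul_zero] at ht
      exact hPmap_monic.ne_zero ht
    have hdeg : t.natDegree = 0 := by
      have h1 : (P.map g).natDegree = P.natDegree := hPmonic.natDegree_map g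
      rw [ht, natDegree_mul hP0 ht0] at h1
      omega
    have htlead : t.coeff 0 = 1 := by
      have h2 : (P.map g).leadingCoeff = P.leadingCoeff * t.leadingCoeff := by
        rw [ht, leadingCoeff_mul]
      rw [hPmap_monic.leadingCoeff, hPmonic.leadingCoeff, one_mul] at h2
      rw [Polynomial.leadingCoeff, hdeg] at h2
      exact h2.symm
    rw [ht, Polynomial.eq_C_of_natDegree_eq_zero hdeg, htlead, map_one, mul_one]
  have hqn : ∀ m : ℕ, 0 < m → (q ^ n) ^ m ≠ 1 := by
    intro m hm
    rw [← pow_mul]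
    exact hq (n * m) (Nat.mul_pos hn hm)
  have hcoeff : ∀ i, ∃ a : k, P.coeff i = RatFunc.C a := by
    intro i
    apply fixed_of_scaleH (hqm0 n) hqn
    rw [← hg_apply, ← Polynomial.coeff_map, hPfix]
  -- Step 4: descend `P` to `k[X]` and use that `k` is algebraically closed.
  have hlifts : P ∈ Polynomial.lifts (RatFunc.C : k →+* RatFunc k) := by
    rw [Polynomial.lifts_iff_coeff_lifts]
    intro i
    obtain ⟨a, ha⟩ := hcoeff i
    exact ⟨a, ha.symm⟩
  obtain ⟨P₀, hP₀⟩ := (Polynomial.mem_lifts P).mp hlifts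
  set ρ : k →+* AlgebraicClosure (RatFunc k) := A.comp (RatFunc.C : k →+* RatFunc k) with hρ
  have hmapP : P₀.map ρ = P.map A := by
    rw [← hP₀, Polynomial.map_map]
  have hP₀0 : P₀ ≠ 0 := by
    rintro rfl
    rw [Polynomial.map_zero] at hP₀
    exact hP0 hP₀.symm
  have hfroot : (P₀.map ρ).eval f = 0 := by
    rw [hmapP, Polynomial.eval_map, ← Polynomial.aeval_def, minpoly.aeval]
  have hρinj : Function.Injective ρ := ρ.injective
  have hmapne : P₀.map ρ ≠ 0 := fun h => hP₀0 (Polynomial.map_injective ρ hρinj (by simpa using h))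
  have hmem : f ∈ (P₀.map ρ).roots := by
    rw [Polynomial.mem_roots hmapne]
    exact hfroot
  have hsplits : P₀.Splits := IsAlgClosed.splits P₀
  rw [hsplits.roots_map ρ, Multiset.mem_map] at hmem
  obtain ⟨r, _, hrf⟩ := hmem
  exact ⟨r, by rw [← hrf]; rfl⟩
end

section
/- Let k be algebraically closed of characteristic zero, q ∈ k not a root of unity. If α in the algebraic closure of k(t) satisfies Q_t^n(α) - α = m for some nonzero integer n and integer m, then m = 0 and α ∈ k. -/
open Polynomial

section helpers

variable {k : Type*} [Field k]

lemma coeff_comp_CsX (s : k) (p : k[X]) (i : ℕ) :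
    (p.comp (C s * X)).coeff i = p.coeff i * s ^ i := by
  induction p using Polynomial.induction_on' with
  | add p q hp hq => simp [add_comp, hp, hq, add_mul]
  | monomial n a =>
    rw [← C_mul_X_pow_eq_monomial, mul_comp, C_comp, pow_comp, X_comp, mul_pow, ← C_pow]
    simp only [coeff_C_mul, ← mul_assoc, mul_comm (C a) (C (s ^ n)), coeff_X_pow, mul_assoc]
    simp only [coeff_C_mul, coeff_X_pow, mul_ite, mul_one, mul_zero]
    split
    · subst i; ring
    · simp

lemma comp_CsX_ne_zero {s : k} (hs0 : s ≠ 0) {p : k[X]} (hp : p ≠ 0) :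
    p.comp (C s * X) ≠ 0 := by
  intro h
  apply hp
  ext i
  have h2 := congrArg (fun q => Polynomial.coeff q i) h
  simp only [coeff_comp_CsX, coeff_zero] at h2
  rcases mul_eq_zero.mp h2 with h3 | h3
  · simp [h3]
  · exact absurd h3 (pow_ne_zero _ hs0)

noncomputable def tauHom (s : k) (hs0 : s ≠ 0) : RatFunc k →+* RatFunc k :=
  RatFunc.liftRingHom ((algebraMap k[X] (RatFunc k)).comp (eval₂RingHom C (C s * X)))
    (by
      intro p hp
      simp only [Submonoid.mem_comap, RingHom.coe_comp, Function.comp_apply]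
      rw [mem_nonZeroDivisors_iff_ne_zero] at hp ⊢
      have : eval₂RingHom C (C s * X) p = p.comp (C s * X) := rfl
      rw [this]
      exact fun h => comp_CsX_ne_zero hs0 hp
        ((map_eq_zero_iff _ (IsFractionRing.injective k[X] (RatFunc k))).mp h))

lemma tauHom_apply (s : k) (hs0 : s ≠ 0) (p : k[X]) :
    tauHom s hs0 (algebraMap k[X] (RatFunc k) p)
      = algebraMap k[X] (RatFunc k) (p.comp (C s * X)) := by
  have h := RatFunc.liftRingHom_apply_div
    ((algebraMap k[X] (RatFunc k)).comp (eval₂RingHom C (C s * X)))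
    (by
      intro p hp
      simp only [Submonoid.mem_comap, RingHom.coe_comp, Function.comp_apply]
      rw [mem_nonZeroDivisors_iff_ne_zero] at hp ⊢
      have : eval₂RingHom C (C s * X) p = p.comp (C s * X) := rfl
      rw [this]
      exact fun h => comp_CsX_ne_zero hs0 hp
        ((map_eq_zero_iff _ (IsFractionRing.injective k[X] (RatFunc k))).mp h)) p 1
  simp only [map_one, div_one] at h
  exact h

lemma keyA (s : k) (hs0 : s ≠ 0) (hs : ∀ i : ℕ, 0 < i → s ^ i ≠ 1)
    (τ : RatFunc k →+* RatFunc k)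
    (hτ : ∀ p : k[X], τ (algebraMap k[X] (RatFunc k) p)
      = algebraMap k[X] (RatFunc k) (p.comp (C s * X)))
    (c : RatFunc k) (a : k) (h : τ c = c + RatFunc.C a) :
    a = 0 ∧ ∃ e : k, c = RatFunc.C e := by
  have hpowinj : ∀ i j : ℕ, s ^ i = s ^ j → i = j := by
    have key : ∀ i j : ℕ, i < j → s ^ i = s ^ j → False := by
      intro i j hij hpow
      have : s ^ i * s ^ (j - i) = s ^ i * 1 := by
        rw [mul_one, ← pow_add, Nat.add_sub_cancel' hij.le, hpow]
      exact hs (j - i) (Nat.sub_pos_of_lt hij)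
        (mul_left_cancel₀ (pow_ne_zero _ hs0) this)
    intro i j hpow
    rcases lt_trichotomy i j with h' | h' | h'
    · exact absurd hpow (fun hp => key i j h' hp)
    · exact h'
    · exact absurd hpow.symm (fun hp => key j i h' hp)
  set A := algebraMap k[X] (RatFunc k) with hA
  have hAinj : Function.Injective A := IsFractionRing.injective k[X] (RatFunc k)
  set f := c.num with hf
  set g := c.denom with hg
  have hg0 : g ≠ 0 := c.denom_ne_zero
  have hgc0 : g.comp (C s * X) ≠ 0 := comp_CsX_ne_zero hs0 hg0
  have hc : c = A f / A g := (c.num_div_denom).symm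
  -- cross-multiplied identity
  have hCa : RatFunc.C a = A (C a) := (RatFunc.algebraMap_C a).symm
  have hident : f.comp (C s * X) * g = (f + C a * g) * g.comp (C s * X) := by
    apply hAinj
    have h1 : τ c = A (f.comp (C s * X)) / A (g.comp (C s * X)) := by
      rw [hc, map_div₀, hτ, hτ]
    have h2 : A (f.comp (C s * X)) / A (g.comp (C s * X)) = A f / A g + A (C a) := by
      rw [← h1, h, hc, hCa]
    have hAg : A g ≠ 0 := fun hh => hg0 (hAinj (by simpa using hh))
    have hAgc : A (g.comp (C s * X)) ≠ 0 := fun hh => hgc0 (hAinj (by simpa using hh))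
    field_simp at h2
    rw [map_mul, map_mul, map_add, map_mul]
    linear_combination h2
  -- coprimality juggling
  have hcop : IsCoprime f g := c.isCoprime_num_denom
  have hcop2 : IsCoprime (f + C a * g) g := by
    have := hcop.add_mul_left_left (C a)
    rwa [mul_comm] at this
  have hcop3 : IsCoprime (f.comp (C s * X)) (g.comp (C s * X)) :=
    hcop.map (eval₂RingHom C (C s * X))
  have hdvd1 : g ∣ g.comp (C s * X) := by
    have : g ∣ (f + C a * g) * g.comp (C s * X) := ⟨f.comp (C s * X), by linear_combination -hident⟩
    exact (hcop2.symm.dvd_of_dvd_mul_left this)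
  have hdvd2 : g.comp (C s * X) ∣ g := by
    have : g.comp (C s * X) ∣ f.comp (C s * X) * g := ⟨f + C a * g, by linear_combination hident⟩
    exact (hcop3.symm.dvd_of_dvd_mul_left this)
  obtain ⟨u, hu⟩ := associated_of_dvd_dvd hdvd1 hdvd2
  obtain ⟨u0, hu0, hCu⟩ := Polynomial.isUnit_iff.mp u.isUnit
  rw [← hCu] at hu
  have hu0ne : u0 ≠ 0 := hu0.ne_zero
  have hgu : g.comp (C s * X) = g * C u0 := hu.symm
  have hfu : f.comp (C s * X) = (f + C a * g) * C u0 := by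
    apply mul_right_cancel₀ hg0
    rw [hgu] at hident
    linear_combination hident
  set v := g.natDegree with hv
  have hgv : g.coeff v = 1 := c.monic_denom.coeff_natDegree
  have hgcoeff : ∀ i, g.coeff i * s ^ i = g.coeff i * u0 := by
    intro i
    have := congrArg (fun p => Polynomial.coeff p i) hgu
    simpa [coeff_comp_CsX, coeff_mul_C] using this
  have hu0v : u0 = s ^ v := by
    have := hgcoeff v
    rw [hgv, one_mul, one_mul] at this
    exact this.symm
  have hgzero : ∀ i, i ≠ v → g.coeff i = 0 := by
    intro i hi
    by_contra hzi
    have := hgcoeff i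
    rw [hu0v] at this
    exact hi (hpowinj i v (mul_left_cancel₀ hzi this))
  have hfcoeff : ∀ i, f.coeff i * s ^ i = (f.coeff i + a * g.coeff i) * u0 := by
    intro i
    have := congrArg (fun p => Polynomial.coeff p i) hfu
    simpa [coeff_comp_CsX, coeff_mul_C, coeff_add, coeff_C_mul] using this
  have ha : a = 0 := by
    have := hfcoeff v
    rw [hgv, hu0v, mul_one] at this
    have h4 : a * s ^ v = 0 := by linear_combination -this
    rcases mul_eq_zero.mp h4 with h5 | h5
    · exact h5
    · exact absurd h5 (pow_ne_zero _ hs0)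
  have hfzero : ∀ i, i ≠ v → f.coeff i = 0 := by
    intro i hi
    by_contra hzi
    have := hfcoeff i
    rw [hgzero i hi, mul_zero, add_zero, hu0v] at this
    exact hi (hpowinj i v (mul_left_cancel₀ hzi this))
  refine ⟨ha, f.coeff v, ?_⟩
  have hgX : g = X ^ v := by
    ext i
    rcases eq_or_ne i v with rfl | hi
    · simp [hgv, coeff_X_pow]
    · simp [hgzero i hi, coeff_X_pow, Ne.symm hi, hi]
  have hfX : f = C (f.coeff v) * X ^ v := by
    ext i
    rcases eq_or_ne i v with rfl | hi
    · simp [coeff_C_mul, coeff_X_pow]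
    · simp [hfzero i hi, coeff_C_mul, coeff_X_pow, Ne.symm hi, hi]
  have hXv : A (X ^ v) ≠ 0 := fun hh => by
    have : (X : k[X]) ^ v = 0 := hAinj (by simpa using hh)
    exact pow_ne_zero v Polynomial.X_ne_zero this
  rw [hc, hfX, hgX, map_mul, mul_div_assoc, div_self hXv, mul_one, hA,
    RatFunc.algebraMap_C]
  simp [coeff_C_mul, coeff_X_pow]

lemma coeff_comp_X_sub_C {K : Type*} [Field K] (P : K[X]) (hP : P.Monic) (hd : 0 < P.natDegree) (a : K) :
    (P.comp (X - C a)).coeff (P.natDegree - 1)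
      = P.coeff (P.natDegree - 1) - P.natDegree * a := by
  obtain ⟨e, he⟩ : ∃ e, P.natDegree = e + 1 :=
    ⟨P.natDegree - 1, (Nat.succ_pred_eq_of_pos hd).symm⟩
  have h1 : X - C a = X + C (-a) := by rw [map_neg]; ring
  rw [h1, ← taylor_apply, taylor_coeff, he]
  simp only [Nat.add_sub_cancel]
  have hH : hasseDeriv e P = C (P.coeff e) + C ((e : K) + 1) * X := by
    ext i
    rw [hasseDeriv_coeff]
    match i with
    | 0 => simp
    | 1 =>
      have h2 : P.coeff (e + 1) = 1 := by
        rw [← he]; exact hP.coeff_natDegree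
      simp [Nat.choose_succ_self_right, add_comm 1 e, h2]
    | (j+2) =>
      have : P.coeff (j + 2 + e) = 0 := by
        apply coeff_eq_zero_of_natDegree_lt
        omega
      simp [this, coeff_C, coeff_one, coeff_X]
  rw [hH]
  simp [he]
  ring

end helpers

theorem auxMain {k : Type*} [Field k] [CharZero k] [IsAlgClosed k]
    (q : k) (hq0 : q ≠ 0) (hq : ∀ n : ℕ, 0 < n → q ^ n ≠ 1)
    {L : Type*} [Field L] [Algebra (RatFunc k) L]
    (σ : RingAut L)
    (hσk : ∀ a : k, σ (algebraMap (RatFunc k) L (RatFunc.C a))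
      = algebraMap (RatFunc k) L (RatFunc.C a))
    (hσt : σ (algebraMap (RatFunc k) L RatFunc.X)
      = algebraMap (RatFunc k) L (RatFunc.C q) *
        algebraMap (RatFunc k) L RatFunc.X)
    (α : L) (hint : IsIntegral (RatFunc k) α) (n : ℤ) (hn : n ≠ 0) (m : ℤ)
    (hα : (σ ^ n) α - α = (m : L)) :
    m = 0 ∧ ∃ c : k,
      α = algebraMap (RatFunc k) L (RatFunc.C c) := by
  classical
  set aM := algebraMap (RatFunc k) L with haM
  -- behaviour of powers of σ on generators
  have hk' : ∀ (N : ℕ) (a : k), (σ ^ N) (aM (RatFunc.C a)) = aM (RatFunc.C a) := by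
    intro N a
    induction N with
    | zero => rw [pow_zero]; rfl
    | succ j ih =>
      rw [pow_succ']
      show σ ((σ ^ j) (aM (RatFunc.C a))) = _
      rw [ih, hσk]
  have ht' : ∀ N : ℕ, (σ ^ N) (aM RatFunc.X) = aM (RatFunc.C (q ^ N)) * aM RatFunc.X := by
    intro N
    induction N with
    | zero => rw [pow_zero]; simp only [pow_zero, map_one]; show aM RatFunc.X = _; simp
    | succ j ih =>
      rw [pow_succ']
      show σ ((σ ^ j) (aM RatFunc.X)) = _
      rw [ih, map_mul, hσk, hσt, ← mul_assoc, ← map_mul, ← map_mul RatFunc.C, pow_succ]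
  -- reduce to a positive natural power
  obtain ⟨N, hNpos, M, hM, hMm⟩ : ∃ N : ℕ, 0 < N ∧ ∃ M : ℤ,
      (σ ^ N) α - α = (M : L) ∧ (M = 0 → m = 0) := by
    rcases hn.lt_or_gt with hneg | hpos
    · refine ⟨(-n).toNat, by omega, -m, ?_, by omega⟩
      have hinv : σ ^ (-n).toNat = (σ ^ n)⁻¹ := by
        have h01 : σ ^ (((-n).toNat : ℤ)) = σ ^ (-n).toNat := zpow_natCast σ (-n).toNat
        rw [show (((-n).toNat : ℤ)) = -n by omega, zpow_neg] at h01
        exact h01.symm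
      have h1 : (σ ^ n) α = α + (m : L) := by linear_combination hα
      have h3 := congrArg (fun x : L => ((σ ^ n)⁻¹ : RingAut L) x) h1
      have h2 : (σ ^ n)⁻¹ ((σ ^ n) α) = α := by
        have : ((σ ^ n)⁻¹ * (σ ^ n)) α = α := by rw [inv_mul_cancel]; rfl
        exact this
      rw [h2, map_add, map_intCast] at h3
      rw [hinv]
      push_cast
      linear_combination -h3
    · refine ⟨n.toNat, by omega, m, ?_, fun h => h⟩
      have h01 : σ ^ ((n.toNat : ℤ)) = σ ^ n.toNat := zpow_natCast σ n.toNat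
      rw [show ((n.toNat : ℤ)) = n by omega] at h01
      rw [← h01]
      exact hα
  set s : k := q ^ N with hsdef
  have hs0 : s ≠ 0 := pow_ne_zero _ hq0
  have hs : ∀ i : ℕ, 0 < i → s ^ i ≠ 1 := by
    intro i hi
    rw [hsdef, ← pow_mul]
    exact hq (N * i) (by positivity)
  set τ := tauHom s hs0 with hτdef
  -- ring hom compatibility
  have hFG : ((σ ^ N : RingAut L) : L →+* L).comp aM = aM.comp τ := by
    apply IsLocalization.ringHom_ext (nonZeroDivisors k[X])
    apply Polynomial.ringHom_ext
    · intro a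
      simp only [RingHom.coe_comp, Function.comp_apply, RatFunc.algebraMap_C]
      rw [show (RatFunc.C a) = algebraMap k[X] (RatFunc k) (Polynomial.C a) from
        (RatFunc.algebraMap_C a).symm, hτdef, tauHom_apply, C_comp, RatFunc.algebraMap_C]
      exact hk' N a
    · simp only [RingHom.coe_comp, Function.comp_apply, RatFunc.algebraMap_X]
      rw [show (RatFunc.X : RatFunc k) = algebraMap k[X] (RatFunc k) Polynomial.X from
        (RatFunc.algebraMap_X).symm, hτdef, tauHom_apply, X_comp, map_mul,
        RatFunc.algebraMap_C, RatFunc.algebraMap_X, map_mul]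
      exact ht' N
  have hkey : ∀ x : RatFunc k, (σ ^ N) (aM x) = aM (τ x) := fun x =>
    RingHom.congr_fun hFG x
  -- minimal polynomial setup
  set P := minpoly (RatFunc k) α with hPdef
  have hmon : P.Monic := minpoly.monic hint
  have hdpos : 0 < P.natDegree := minpoly.natDegree_pos hint
  set m' : RatFunc k := (M : RatFunc k) with hm'def
  have hσα : (σ ^ N) α = α + aM m' := by
    rw [hm'def, map_intCast]
    linear_combination hM
  have h0' : eval₂ aM α P = 0 := by
    have := minpoly.aeval (RatFunc k) α
    rwa [aeval_def] at this
  have hroot : Polynomial.aeval ((σ ^ N) α) (P.map τ) = 0 := by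
    rw [aeval_def, eval₂_map, ← hFG]
    exact (Polynomial.hom_eval₂ P aM ((σ ^ N : RingAut L) : L →+* L) α).symm.trans
      (by rw [h0', map_zero])
  have hPmapmon : (P.map τ).Monic := hmon.map _
  have hdvd : minpoly (RatFunc k) (α + aM m') ∣ P.map τ :=
    minpoly.dvd _ _ (by rw [← hσα]; exact hroot)
  have hQeq : minpoly (RatFunc k) (α + aM m') = P.comp (X - C m') :=
    minpoly.add_algebraMap α m'
  have hQmon : (minpoly (RatFunc k) (α + aM m')).Monic := by
    rw [hQeq]; exact hmon.comp_X_sub_C _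
  have hdeg1 : (P.map τ).natDegree = P.natDegree := hmon.natDegree_map _
  have hdeg2 : (minpoly (RatFunc k) (α + aM m')).natDegree = P.natDegree := by
    rw [hQeq, natDegree_comp, natDegree_X_sub_C, mul_one]
  have heq : P.comp (X - C m') = P.map τ := by
    rw [← hQeq]
    obtain ⟨r, hr⟩ := hdvd
    have hr0 : r ≠ 0 := by
      rintro rfl
      rw [mul_zero] at hr
      exact hPmapmon.ne_zero hr
    have hrd : r.natDegree = 0 := by
      have := natDegree_mul hQmon.ne_zero hr0
      rw [← hr, hdeg1, hdeg2] at this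
      omega
    obtain ⟨c0, hc0⟩ := Polynomial.natDegree_eq_zero.mp hrd
    have hc1 : c0 = 1 := by
      have := hPmapmon
      rw [hr, ← hc0, Polynomial.Monic, leadingCoeff_mul, hQmon.leadingCoeff,
        one_mul, leadingCoeff_C] at this
      exact this
    rw [hr, ← hc0, hc1, map_one, mul_one]
  -- extract subleading coefficient
  have hcoeffeq : τ (P.coeff (P.natDegree - 1))
      = P.coeff (P.natDegree - 1) - (P.natDegree : RatFunc k) * m' := by
    have h6 := congrArg (fun p => Polynomial.coeff p (P.natDegree - 1)) heq
    simp only [coeff_map] at h6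
    rw [coeff_comp_X_sub_C P hmon hdpos m'] at h6
    exact h6.symm
  have hb : τ (P.coeff (P.natDegree - 1)) = P.coeff (P.natDegree - 1)
      + RatFunc.C (-((P.natDegree : k) * (M : k))) := by
    rw [hcoeffeq, map_neg, map_mul, map_natCast, map_intCast, hm'def]
    ring
  obtain ⟨hb0, -⟩ := keyA s hs0 hs τ (fun p => by rw [hτdef]; exact tauHom_apply s hs0 p)
    _ _ hb
  have hM0 : M = 0 := by
    have h7 : (P.natDegree : k) * (M : k) = 0 := by linear_combination -hb0
    rcases mul_eq_zero.mp h7 with h8 | h8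
    · exact absurd h8 (Nat.cast_ne_zero.mpr hdpos.ne')
    · exact_mod_cast h8
  have hm0 : m = 0 := hMm hM0
  refine ⟨hm0, ?_⟩
  -- now the minimal polynomial is fixed
  have hPfix : P.map τ = P := by
    rw [← heq, hm'def, hM0]
    simp
  have hcoefffix : ∀ i, ∃ e : k, P.coeff i = RatFunc.C e := by
    intro i
    have h5 : τ (P.coeff i) = P.coeff i + RatFunc.C 0 := by
      have h9 := congrArg (fun p => Polynomial.coeff p i) hPfix
      simp only [coeff_map] at h9
      rw [map_zero, add_zero]
      exact h9
    exact (keyA s hs0 hs τ (fun p => by rw [hτdef]; exact tauHom_apply s hs0 p) _ 0 h5).2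
  have hlift : P ∈ Polynomial.lifts (RatFunc.C : k →+* RatFunc k) := by
    rw [Polynomial.lifts_iff_coeff_lifts]
    intro i
    obtain ⟨e, he⟩ := hcoefffix i
    exact ⟨e, he.symm⟩
  obtain ⟨Q, hQmap⟩ := (Polynomial.mem_lifts _).mp hlift
  have hQ0 : Q ≠ 0 := by
    rintro rfl
    rw [Polynomial.map_zero] at hQmap
    exact minpoly.ne_zero hint hQmap.symm
  set φ : k →+* L := aM.comp (RatFunc.C : k →+* RatFunc k) with hφdef
  have hroot2 : (Q.map φ).eval α = 0 := by
    rw [eval_map, hφdef, ← eval₂_map, hQmap]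
    have := minpoly.aeval (RatFunc k) α
    rwa [aeval_def] at this
  have hQsplit : Q.Splits := IsAlgClosed.splits Q
  have hmapne : Q.map φ ≠ 0 := by
    rw [Polynomial.map_ne_zero_iff φ.injective]
    exact hQ0
  have hmem : α ∈ (Q.map φ).roots := by
    rw [mem_roots hmapne]
    exact hroot2
  rw [hQsplit.roots_map φ] at hmem
  obtain ⟨r, hr, hrα⟩ := Multiset.mem_map.mp hmem
  exact ⟨r, hrα.symm⟩


/-- Lemma 3.8: let `k` be algebraically closed of characteristic zero, `q ∈ k` not a root
of unity, and `σ` an extension to the algebraic closure of `k(t)` of the `q`-shift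
automorphism `t ↦ qt` of `k(t)`.  If `σ^n α - α = m` for some nonzero integer `n` and
integer `m`, then `m = 0` and `α ∈ k`. -/
theorem stmt14 {k : Type*} [Field k] [CharZero k] [IsAlgClosed k]
    (q : k) (hq0 : q ≠ 0) (hq : ∀ n : ℕ, 0 < n → q ^ n ≠ 1)
    (σ : RingAut (AlgebraicClosure (RatFunc k)))
    (hσk : ∀ a : k, σ (algebraMap (RatFunc k) (AlgebraicClosure (RatFunc k)) (RatFunc.C a))
      = algebraMap (RatFunc k) (AlgebraicClosure (RatFunc k)) (RatFunc.C a))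
    (hσt : σ (algebraMap (RatFunc k) (AlgebraicClosure (RatFunc k)) RatFunc.X)
      = algebraMap (RatFunc k) (AlgebraicClosure (RatFunc k)) (RatFunc.C q) *
        algebraMap (RatFunc k) (AlgebraicClosure (RatFunc k)) RatFunc.X)
    (α : AlgebraicClosure (RatFunc k)) (n : ℤ) (hn : n ≠ 0) (m : ℤ)
    (hα : (σ ^ n) α - α = (m : AlgebraicClosure (RatFunc k))) :
    m = 0 ∧ ∃ c : k,
      α = algebraMap (RatFunc k) (AlgebraicClosure (RatFunc k)) (RatFunc.C c) := by
  exact auxMain q hq0 hq σ hσk hσt α (Algebra.IsIntegral.isIntegral α) n hn m hα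
end

section
/- Let k be algebraically closed of characteristic zero, q ∈ k not a root of unity. If α in the algebraic closure of k(t) satisfies Q_t^n(α) = q^m α for some nonzero integer n and integer m, then α = c t^{m/n} for some c ∈ k. -/
open Polynomial

lemma stmt15_rootlem {k A : Type*} [Field k] [IsAlgClosed k] [Field A] (g : k →+* A)
    (p₀ : k[X]) (hp : p₀ ≠ 0) (u : A) (hu : (p₀.map g).eval u = 0) :
    ∃ c : k, g c = u := by
  have hmapne : p₀.map g ≠ 0 := (Polynomial.map_ne_zero_iff g.injective).mpr hp
  have hu' : u ∈ (p₀.map g).roots := by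
    rw [Polynomial.mem_roots hmapne]; exact hu
  rw [(IsAlgClosed.splits p₀).roots_map_of_ne_zero hmapne] at hu'
  obtain ⟨c, _, rfl⟩ := Multiset.mem_map.mp hu'
  exact ⟨c, rfl⟩


lemma stmt15_ecoeff {k : Type*} [Field k] (lam : k) (P : k[X]) (i : ℕ) :
    (Polynomial.aeval (Polynomial.C lam * Polynomial.X) P).coeff i = lam ^ i * P.coeff i := by
  induction P using Polynomial.induction_on' with
  | add p q hp hq => simp [hp, hq, mul_add]
  | monomial n a =>
    rw [Polynomial.aeval_monomial, mul_pow, ← Polynomial.C_pow, algebraMap_eq,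
      ← mul_assoc, ← Polynomial.C_mul, Polynomial.C_mul_X_pow_eq_monomial,
      Polynomial.coeff_monomial, Polynomial.coeff_monomial]
    by_cases h : n = i <;> simp [h, mul_comm]

lemma stmt15_fixed_const {k : Type*} [Field k] (lam : k) (hlam0 : lam ≠ 0)
    (hinj : ∀ i j : ℕ, lam ^ i = lam ^ j → i = j) (a : RatFunc k)
    (h : (Polynomial.aeval (Polynomial.C lam * Polynomial.X) a.num) * a.denom
        = a.num * (Polynomial.aeval (Polynomial.C lam * Polynomial.X) a.denom)) :
    ∃ c : k, RatFunc.C c = a := by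
  by_cases ha : a = 0
  · exact ⟨0, by simp [ha]⟩
  have hP0 : a.num ≠ 0 := RatFunc.num_ne_zero ha
  have hQ0 : a.denom ≠ 0 := RatFunc.denom_ne_zero a
  have cop : IsCoprime a.num a.denom := RatFunc.isCoprime_num_denom a
  have hdvd : a.num ∣ Polynomial.aeval (Polynomial.C lam * Polynomial.X) a.num :=
    cop.dvd_of_dvd_mul_right (by rw [h]; exact dvd_mul_right _ _)
  have hdegle : ∀ R : k[X],
      (Polynomial.aeval (Polynomial.C lam * Polynomial.X) R).natDegree ≤ R.natDegree := by
    intro R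
    apply Polynomial.natDegree_le_iff_coeff_eq_zero.mpr
    intro i hi
    rw [stmt15_ecoeff, Polynomial.coeff_eq_zero_of_natDegree_lt hi, mul_zero]
  obtain ⟨r, hr⟩ := hdvd
  have heP0 : Polynomial.aeval (Polynomial.C lam * Polynomial.X) a.num ≠ 0 := by
    intro h0
    apply hP0
    ext i
    have := congrArg (fun z => Polynomial.coeff z i) h0
    simp only [stmt15_ecoeff, Polynomial.coeff_zero] at this
    simpa using (mul_eq_zero.mp this).resolve_left (pow_ne_zero i hlam0)
  have hr0 : r ≠ 0 := by rintro rfl; rw [mul_zero] at hr; exact heP0 hr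
  have hrdeg : r.natDegree = 0 := by
    have h1 := hdegle a.num
    rw [hr, Polynomial.natDegree_mul hP0 hr0] at h1
    omega
  obtain ⟨c, rfl⟩ : ∃ c, r = Polynomial.C c :=
    ⟨r.coeff 0, Polynomial.eq_C_of_natDegree_eq_zero hrdeg⟩
  have heQ : Polynomial.aeval (Polynomial.C lam * Polynomial.X) a.denom = Polynomial.C c * a.denom := by
    have h2 : a.num * Polynomial.aeval (Polynomial.C lam * Polynomial.X) a.denom
        = a.num * (Polynomial.C c * a.denom) := by rw [← h, hr]; ring
    exact mul_left_cancel₀ hP0 h2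
  have keyP : ∀ i : ℕ, a.num.coeff i ≠ 0 → lam ^ i = c := by
    intro i hi
    have := congrArg (fun z => Polynomial.coeff z i) hr
    simp only [stmt15_ecoeff, Polynomial.coeff_mul_C] at this
    exact mul_right_cancel₀ hi (by rw [this]; ring)
  have keyQ : ∀ i : ℕ, a.denom.coeff i ≠ 0 → lam ^ i = c := by
    intro i hi
    have := congrArg (fun z => Polynomial.coeff z i) heQ
    simp only [stmt15_ecoeff, Polynomial.coeff_C_mul] at this
    exact mul_right_cancel₀ hi this
  have hlp : a.num.coeff a.num.natDegree ≠ 0 := Polynomial.leadingCoeff_ne_zero.mpr hP0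
  have hlq : a.denom.coeff a.denom.natDegree ≠ 0 := Polynomial.leadingCoeff_ne_zero.mpr hQ0
  have hiPQ : a.num.natDegree = a.denom.natDegree :=
    hinj _ _ ((keyP _ hlp).trans (keyQ _ hlq).symm)
  have Pmono : a.num = Polynomial.C (a.num.coeff a.num.natDegree) * Polynomial.X ^ a.num.natDegree := by
    ext i
    by_cases hi : i = a.num.natDegree
    · simp [hi]
    · have hzero : a.num.coeff i = 0 := by
        by_contra hne
        exact hi (hinj i _ ((keyP i hne).trans (keyP _ hlp).symm))
      simp [hzero, Polynomial.coeff_X_pow, hi]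
  have Qmono : a.denom = Polynomial.C (a.denom.coeff a.denom.natDegree) * Polynomial.X ^ a.num.natDegree := by
    ext i
    by_cases hi : i = a.num.natDegree
    · rw [hi]; simp [Polynomial.coeff_X_pow, hiPQ]
    · have hzero : a.denom.coeff i = 0 := by
        by_contra hne
        exact hi ((hinj i _ ((keyQ i hne).trans (keyQ _ hlq).symm)).trans hiPQ.symm)
      simp [hzero, Polynomial.coeff_X_pow, hi]
  refine ⟨a.num.coeff a.num.natDegree / a.denom.coeff a.denom.natDegree, ?_⟩
  conv_rhs => rw [← RatFunc.num_div_denom a, Pmono, Qmono]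
  rw [map_mul, map_mul, map_pow, RatFunc.algebraMap_C, RatFunc.algebraMap_C, RatFunc.algebraMap_X,
    mul_div_mul_right _ _ (pow_ne_zero _ RatFunc.X_ne_zero), ← map_div₀]

theorem stmt15_aux {k : Type*} [Field k] [CharZero k] [IsAlgClosed k]
    (q : k) (hq0 : q ≠ 0) (hq : ∀ n : ℕ, 0 < n → q ^ n ≠ 1)
    (σ : RingAut (AlgebraicClosure (RatFunc k)))
    (hσk : ∀ a : k, σ (algebraMap (RatFunc k) (AlgebraicClosure (RatFunc k)) (RatFunc.C a))
      = algebraMap (RatFunc k) (AlgebraicClosure (RatFunc k)) (RatFunc.C a))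
    (hσt : σ (algebraMap (RatFunc k) (AlgebraicClosure (RatFunc k)) RatFunc.X)
      = algebraMap (RatFunc k) (AlgebraicClosure (RatFunc k)) (RatFunc.C q) *
        algebraMap (RatFunc k) (AlgebraicClosure (RatFunc k)) RatFunc.X)
    (α : AlgebraicClosure (RatFunc k)) (N : ℕ) (hN : 0 < N) (m : ℤ)
    (hα : (σ ^ N) α =
      (algebraMap (RatFunc k) (AlgebraicClosure (RatFunc k)) (RatFunc.C q)) ^ m * α) :
    ∃ (c : k) (β : AlgebraicClosure (RatFunc k)),
      β ^ (N : ℤ) = (algebraMap (RatFunc k) (AlgebraicClosure (RatFunc k)) RatFunc.X) ^ m ∧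
      α = algebraMap (RatFunc k) (AlgebraicClosure (RatFunc k)) (RatFunc.C c) * β := by
  have dummy : True := trivial
  
  set φ := algebraMap (RatFunc k) (AlgebraicClosure (RatFunc k)) with hφdef
  set g : k →+* AlgebraicClosure (RatFunc k) := φ.comp RatFunc.C with hgdef
  set T := φ RatFunc.X with hTdef
  set Q := φ (RatFunc.C q) with hQdef
  have mulapp : ∀ (f h : RingAut (AlgebraicClosure (RatFunc k))) x, (f * h) x = f (h x) := fun _ _ _ => rfl
  have hQg : Q = g q := rfl
  have hgin : Function.Injective g := g.injective
  have hT0 : T ≠ 0 := by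
    simpa [hTdef] using (map_ne_zero_iff φ φ.injective).mpr (RatFunc.X_ne_zero)
  have hQ0 : Q ≠ 0 := by
    simpa [hQdef] using (map_ne_zero_iff φ φ.injective).mpr
      ((map_ne_zero_iff (RatFunc.C (K := k)) (RingHom.injective _)).mpr hq0)
  -- σ-power facts
  have fixg : ∀ (j : ℕ) (a : k), (σ ^ j) (g a) = g a := by
    intro j a
    induction j with
    | zero => rfl
    | succ j ih => rw [pow_succ', mulapp, ih]; exact hσk a
  have hXpow : ∀ j : ℕ, (σ ^ j) T = g (q ^ j) * T := by
    intro j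
    induction j with
    | zero =>
      rw [show (σ ^ 0) T = T from rfl, pow_zero, map_one, one_mul]
    | succ j ih =>
      have h1 : σ (g (q ^ j)) = g (q ^ j) := hσk _
      rw [pow_succ', mulapp, ih, map_mul, hσt, h1, hQg, pow_succ, map_mul]
      ring
  -- the root β
  obtain ⟨β, hβ⟩ := IsAlgClosed.exists_pow_nat_eq (T ^ m) hN
  have hβz : β ^ (N : ℤ) = T ^ m := by rw [zpow_natCast]; exact hβ
  have hTm0 : T ^ m ≠ 0 := zpow_ne_zero _ hT0
  have hβ0 : β ≠ 0 := by rintro rfl; rw [zero_pow hN.ne'] at hβ; exact hTm0 hβ.symm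
  by_cases hα0 : α = 0
  · exact ⟨0, β, hβz, by simp [hα0]⟩
  -- the root of unity u
  have key : ((σ ^ N) β) ^ N = (Q ^ m * β) ^ N := by
    have e1 : (Q ^ m * β) ^ N = Q ^ ((N : ℤ) * m) * T ^ m := by
      rw [mul_pow, hβ, ← zpow_natCast (Q ^ m) N, ← zpow_mul, mul_comm m (N : ℤ)]
    have e2 : ((σ ^ N) β) ^ N = Q ^ ((N : ℤ) * m) * T ^ m := by
      rw [← map_pow, hβ, map_zpow₀, hXpow, map_pow, ← hQg, mul_zpow, ← zpow_natCast Q N,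
        ← zpow_mul]
    rw [e1, e2]
  have hden : Q ^ m * β ≠ 0 := mul_ne_zero (zpow_ne_zero _ hQ0) hβ0
  set u := (σ ^ N) β / (Q ^ m * β) with hudef
  have hu1 : u ^ N = 1 := by rw [hudef, div_pow, key, div_self (pow_ne_zero _ hden)]
  have hu0 : u ≠ 0 := by
    apply div_ne_zero _ hden
    intro h0
    exact hβ0 ((σ ^ N).injective (h0.trans (map_zero _).symm))
  obtain ⟨ω, hω⟩ : ∃ c : k, g c = u := by
    apply stmt15_rootlem g (Polynomial.X ^ N - Polynomial.C 1) (Polynomial.X_pow_sub_C_ne_zero hN 1) u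
    rw [Polynomial.map_sub, Polynomial.map_pow, Polynomial.map_X, Polynomial.map_C, map_one]
    simp [hu1]
  have hω0 : ω ≠ 0 := by rintro rfl; rw [map_zero] at hω; exact hu0 hω.symm
  have hωN : ω ^ N = 1 := hgin (by rw [map_pow, hω, hu1, map_one])
  -- γ and its transformation
  set γ := α / β with hγdef
  have hγ0 : γ ≠ 0 := div_ne_zero hα0 hβ0
  have hβσ : (σ ^ N) β = u * (Q ^ m * β) := (div_mul_cancel₀ _ hden).symm
  have hσγ : (σ ^ N) γ = (g ω)⁻¹ * γ := by
    rw [hγdef, map_div₀, hα, hβσ, hω]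
    field_simp
  have hiter : ∀ j : ℕ, (σ ^ (N * j)) γ = ((g ω)⁻¹) ^ j * γ := by
    intro j
    induction j with
    | zero => rw [Nat.mul_zero, pow_zero, pow_zero, one_mul]; rfl
    | succ j ih =>
      have : σ ^ (N * (j + 1)) = σ ^ (N * j) * σ ^ N := by rw [← pow_add, Nat.mul_succ]
      rw [this, mulapp, hσγ, map_mul, map_inv₀, fixg, ih, pow_succ]
      ring
  have hτγ : (σ ^ (N * N)) γ = γ := by
    rw [hiter N, inv_pow, ← map_pow, hωN, map_one, inv_one, one_mul]
  -- the scaling constant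
  set lam := q ^ (N * N) with hlamdef
  have hlam0 : lam ≠ 0 := pow_ne_zero _ hq0
  have hlaminj : ∀ i j : ℕ, lam ^ i = lam ^ j → i = j := by
    have keyl : ∀ i j : ℕ, i < j → lam ^ i ≠ lam ^ j := by
      intro i j hij hcon
      have h1 : lam ^ i * lam ^ (j - i) = lam ^ i * 1 := by
        rw [mul_one, ← pow_add, show i + (j - i) = j by omega, ← hcon]
      have h2 : lam ^ (j - i) = 1 := mul_left_cancel₀ (pow_ne_zero i hlam0) h1
      rw [hlamdef, ← pow_mul] at h2
      exact hq _ (Nat.mul_pos (Nat.mul_pos hN hN) (by omega)) h2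
    intro i j hcon
    rcases lt_trichotomy i j with hl | he | hl
    · exact absurd hcon (keyl _ _ hl)
    · exact he
    · exact absurd hcon.symm (keyl _ _ hl)
  have hτT : (σ ^ (N * N)) T = g lam * T := hXpow _
  -- substitution endomorphism of RatFunc k
  set e : k[X] →+* k[X] :=
    ((Polynomial.aeval (Polynomial.C lam * Polynomial.X) : k[X] →ₐ[k] k[X]) : k[X] →+* k[X])
    with hedef
  have hecoeff : ∀ (P : k[X]) (i : ℕ), (e P).coeff i = lam ^ i * P.coeff i :=
    fun P i => stmt15_ecoeff lam P i
  have heinj : Function.Injective e := by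
    intro P R hPR
    ext i
    have h1 := congrArg (fun z => Polynomial.coeff z i) hPR
    simp only [hecoeff] at h1
    exact mul_left_cancel₀ (pow_ne_zero i hlam0) h1
  have hgec : Function.Injective ((algebraMap k[X] (RatFunc k)).comp e) :=
    (RatFunc.algebraMap_injective k).comp heinj
  set s : RatFunc k →+* RatFunc k := IsFractionRing.lift hgec with hsdef
  have hs : ∀ P : k[X], s (algebraMap k[X] (RatFunc k) P) = algebraMap k[X] (RatFunc k) (e P) :=
    fun P => IsFractionRing.lift_algebraMap hgec P
  have H : RingHom.comp ((σ ^ (N * N)).toRingHom) φ = φ.comp s := by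
    apply IsLocalization.ringHom_ext (nonZeroDivisors k[X])
    apply Polynomial.ringHom_ext
    · intro a
      show (σ ^ (N * N)) (φ (algebraMap k[X] (RatFunc k) (Polynomial.C a)))
          = φ (s (algebraMap k[X] (RatFunc k) (Polynomial.C a)))
      rw [hs]
      have h1 : e (Polynomial.C a) = Polynomial.C a := by
        show Polynomial.aeval _ (Polynomial.C a) = _
        rw [Polynomial.aeval_C]
        rfl
      rw [h1, RatFunc.algebraMap_C]
      exact fixg _ a
    · show (σ ^ (N * N)) (φ (algebraMap k[X] (RatFunc k) Polynomial.X))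
          = φ (s (algebraMap k[X] (RatFunc k) Polynomial.X))
      rw [hs]
      have h1 : e Polynomial.X = Polynomial.C lam * Polynomial.X := by
        show Polynomial.aeval _ Polynomial.X = _
        rw [Polynomial.aeval_X]
      rw [h1, map_mul, RatFunc.algebraMap_C, RatFunc.algebraMap_X, map_mul]
      exact hτT
  have hcomm : ∀ a : RatFunc k, (σ ^ (N * N)) (φ a) = φ (s a) := fun a => RingHom.congr_fun H a
  -- minimal polynomial of γ
  have hint : IsIntegral (RatFunc k) γ := Algebra.IsIntegral.isIntegral γ
  set p := minpoly (RatFunc k) γ with hpdef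
  have hpmonic : p.Monic := minpoly.monic hint
  have hpne : p ≠ 0 := minpoly.ne_zero hint
  have h0 : Polynomial.eval₂ φ γ p = 0 := minpoly.aeval (RatFunc k) γ
  have hroot : Polynomial.aeval γ (p.map s) = 0 := by
    have h3 := Polynomial.hom_eval₂ p φ ((σ ^ (N * N)).toRingHom) γ
    rw [h0, map_zero] at h3
    rw [show ((σ ^ (N * N)).toRingHom) γ = γ from hτγ] at h3
    rw [Polynomial.aeval_def, Polynomial.eval₂_map, ← hφdef, ← H]
    exact h3.symm
  have hps : p.map s = p := by
    have hdvd : p ∣ p.map s := minpoly.dvd (RatFunc k) γ hroot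
    exact (Polynomial.eq_of_dvd_of_natDegree_le_of_leadingCoeff hdvd
      Polynomial.natDegree_map_le
      (hpmonic.trans (hpmonic.map s).symm)).symm
  have hfix : ∀ i : ℕ, s (p.coeff i) = p.coeff i := by
    intro i
    conv_rhs => rw [← hps]
    rw [Polynomial.coeff_map]
  have hrange : ∀ i : ℕ, p.coeff i ∈ Set.range (RatFunc.C : k →+* RatFunc k) := by
    intro i
    set a := p.coeff i with hadef
    have hsa : s a = a := hfix i
    have hne : algebraMap k[X] (RatFunc k) a.denom ≠ 0 :=
      RatFunc.algebraMap_ne_zero (RatFunc.denom_ne_zero a)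
    have hene : algebraMap k[X] (RatFunc k) (e a.denom) ≠ 0 := by
      apply RatFunc.algebraMap_ne_zero
      intro h0'
      exact RatFunc.denom_ne_zero a (heinj (by rw [h0', map_zero]))
    have hdiv : algebraMap k[X] (RatFunc k) (e a.num) / algebraMap k[X] (RatFunc k) (e a.denom)
        = algebraMap k[X] (RatFunc k) a.num / algebraMap k[X] (RatFunc k) a.denom := by
      rw [← hs, ← hs, ← map_div₀, RatFunc.num_div_denom, hsa]
    rw [div_eq_div_iff hene hne, ← map_mul, ← map_mul] at hdiv
    have hcross := RatFunc.algebraMap_injective k hdiv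
    obtain ⟨c, hc⟩ := stmt15_fixed_const lam hlam0 hlaminj a hcross
    exact ⟨c, hc⟩
  have hlift : p ∈ Polynomial.lifts (RatFunc.C : k →+* RatFunc k) :=
    (Polynomial.lifts_iff_coeff_lifts p).mpr hrange
  obtain ⟨p₀, hp₀⟩ := (Polynomial.mem_lifts p).mp hlift
  have hp₀0 : p₀ ≠ 0 := by rintro rfl; rw [Polynomial.map_zero] at hp₀; exact hpne hp₀.symm
  have hγroot : (p₀.map g).eval γ = 0 := by
    have h4 : p₀.map g = p.map φ := by
      rw [← hp₀, Polynomial.map_map]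
    rw [h4, Polynomial.eval_map]
    exact h0
  obtain ⟨c, hc⟩ := stmt15_rootlem g p₀ hp₀0 γ hγroot
  refine ⟨c, β, hβz, ?_⟩
  have hcγ : φ (RatFunc.C c) = γ := hc
  rw [hcγ, hγdef, div_mul_cancel₀ _ hβ0]






/-- Lemma 3.9: let `k` be algebraically closed of characteristic zero, `q ∈ k` not a root
of unity, and `σ` an extension to the algebraic closure of `k(t)` of the `q`-shift
automorphism `t ↦ qt` of `k(t)`.  If `σ^n α = q^m α` for some nonzero integer `n` and
integer `m`, then `α = c · t^{m/n}` for some `c ∈ k`, where `t^{m/n}` denotes a root `β`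
of `Y^n = t^m` in the algebraic closure. -/
theorem stmt15 {k : Type*} [Field k] [CharZero k] [IsAlgClosed k]
    (q : k) (hq0 : q ≠ 0) (hq : ∀ n : ℕ, 0 < n → q ^ n ≠ 1)
    (σ : RingAut (AlgebraicClosure (RatFunc k)))
    (hσk : ∀ a : k, σ (algebraMap (RatFunc k) (AlgebraicClosure (RatFunc k)) (RatFunc.C a))
      = algebraMap (RatFunc k) (AlgebraicClosure (RatFunc k)) (RatFunc.C a))
    (hσt : σ (algebraMap (RatFunc k) (AlgebraicClosure (RatFunc k)) RatFunc.X)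
      = algebraMap (RatFunc k) (AlgebraicClosure (RatFunc k)) (RatFunc.C q) *
        algebraMap (RatFunc k) (AlgebraicClosure (RatFunc k)) RatFunc.X)
    (α : AlgebraicClosure (RatFunc k)) (n : ℤ) (hn : n ≠ 0) (m : ℤ)
    (hα : (σ ^ n) α =
      (algebraMap (RatFunc k) (AlgebraicClosure (RatFunc k)) (RatFunc.C q)) ^ m * α) :
    ∃ (c : k) (β : AlgebraicClosure (RatFunc k)),
      β ^ n = (algebraMap (RatFunc k) (AlgebraicClosure (RatFunc k)) RatFunc.X) ^ m ∧
      α = algebraMap (RatFunc k) (AlgebraicClosure (RatFunc k)) (RatFunc.C c) * β := by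
  set φ := algebraMap (RatFunc k) (AlgebraicClosure (RatFunc k)) with hφdef
  set Q := φ (RatFunc.C q) with hQdef
  set T := φ RatFunc.X with hTdef
  have mulapp : ∀ (f h : RingAut (AlgebraicClosure (RatFunc k))) x, (f * h) x = f (h x) :=
    fun _ _ _ => rfl
  have fixg : ∀ (j : ℕ) (a : k), (σ ^ j) (φ (RatFunc.C a)) = φ (RatFunc.C a) := by
    intro j a
    induction j with
    | zero => rfl
    | succ j ih => rw [pow_succ', mulapp, ih]; exact hσk a
  have hQ0 : Q ≠ 0 := by
    simpa [hQdef] using (map_ne_zero_iff φ φ.injective).mpr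
      ((map_ne_zero_iff (RatFunc.C (K := k)) (RingHom.injective _)).mpr hq0)
  rcases lt_or_gt_of_ne hn with hneg | hpos
  · set N := (-n).toNat with hNdef
    have hN : 0 < N := by omega
    have hnN : n = -(N : ℤ) := by omega
    have h1 : (σ ^ N) α = Q ^ (-m) * α := by
      have hz : σ ^ n = ((σ ^ N)⁻¹ : RingAut (AlgebraicClosure (RatFunc k))) := by
        rw [hnN, zpow_neg, zpow_natCast]
      have h2 : (σ ^ N) ((σ ^ n) α) = (σ ^ N) (Q ^ m * α) := congrArg _ hα
      rw [hz, show (σ ^ N) (((σ ^ N)⁻¹ :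
        RingAut (AlgebraicClosure (RatFunc k))) α) = α from (σ ^ N).apply_symm_apply α] at h2
      have hfQ : (σ ^ N) Q = Q := fixg N q
      rw [map_mul, map_zpow₀, hfQ] at h2
      have hQm0 : Q ^ m ≠ 0 := zpow_ne_zero _ hQ0
      rw [zpow_neg, inv_mul_eq_div, eq_div_iff hQm0]
      conv_rhs => rw [h2]
      ring
    obtain ⟨c, β, hb1, hb2⟩ := stmt15_aux q hq0 hq σ hσk hσt α N hN (-m) h1
    refine ⟨c, β, ?_, hb2⟩
    rw [hnN, zpow_neg, hb1, zpow_neg, inv_inv]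
  · set N := n.toNat with hNdef
    have hN : 0 < N := by omega
    have hnN : n = (N : ℤ) := by omega
    have h1 : (σ ^ N) α = Q ^ m * α := by
      rw [← hα, hnN, zpow_natCast]
    obtain ⟨c, β, hb1, hb2⟩ := stmt15_aux q hq0 hq σ hσk hσt α N hN m h1
    exact ⟨c, β, by rw [hnN]; exact hb1, hb2⟩
end
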